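/- arXiv:1710.04273 — 7 statements merged into one kernel-verified Lean document; each statement's English description precedes it below -/
import Mathlib

section
/- Let k ≥ 1, C > 0, C_α > 0, and set α_t = C_α/t for t ≥ 1. Let A : [1, ∞) → ℝ^{k×k} be continuous with zᵀ A(t) z ≥ C‖z‖² for every z ∈ ℝ^k and every t ≥ 1. Fix s ≥ 1 and let Φ : [s, ∞) → ℝ^{k×k} be differentiable with Φ(s) = I (the identity matrix) and Φ′(t) = −α_t A(t) Φ(t) for all t ≥ s. Then for all t ≥ s one has ‖Φ(t)‖² ≤ k (s/t)^{2 C C_α}. -/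
attribute [local instance] Matrix.frobeniusNormedAddCommGroup Matrix.frobeniusNormedSpace

/-- Entry evaluation as a continuous linear map on matrices (Frobenius norm). -/
noncomputable def entryCLM (k : ℕ) (i j : Fin k) :
    Matrix (Fin k) (Fin k) ℝ →L[ℝ] ℝ :=
  LinearMap.toContinuousLinearMap
    { toFun := fun M => M i j
      map_add' := fun _ _ => rfl
      map_smul' := fun _ _ => rfl }

/-- Power-law decay `‖Φ_{t,s}‖² ≤ k (s/t)^{2CC_α}` of the Frobenius norm of
the fundamental solution of `dΦ = −α_t A(t) Φ dt`, `Φ(s) = 1`, with learning rate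
`α_t = C_α/t` and `zᵀ A(t) z ≥ C‖z‖²`. -/
theorem stmt1 (k : ℕ) (hk : 1 ≤ k) (C Cα : ℝ) (hC : 0 < C) (hCα : 0 < Cα)
    (A : ℝ → Matrix (Fin k) (Fin k) ℝ)
    (hAcont : ContinuousOn A (Set.Ici 1))
    (hA : ∀ t ∈ Set.Ici (1 : ℝ), ∀ z : EuclideanSpace ℝ (Fin k),
      C * ‖z‖ ^ 2 ≤ ∑ i, ∑ j, z i * A t i j * z j)
    (s : ℝ) (hs : 1 ≤ s)
    (Φ : ℝ → Matrix (Fin k) (Fin k) ℝ)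
    (hΦs : Φ s = 1)
    (hΦ : ∀ t ∈ Set.Ici s, HasDerivWithinAt Φ (-((Cα / t) • (A t * Φ t))) (Set.Ici s) t) :
    ∀ t ∈ Set.Ici s, ‖Φ t‖ ^ 2 ≤ (k : ℝ) * (s / t) ^ (2 * C * Cα) := by
  have hs0 : (0 : ℝ) < s := lt_of_lt_of_le one_pos hs
  set p : ℝ := 2 * C * Cα with hp
  have hp0 : 0 < p := by positivity
  set g : ℝ → ℝ := fun t => ∑ i, ∑ j, Φ t i j ^ 2 with hgdef
  set D : ℝ → ℝ := fun t =>
    ∑ i, ∑ j, (2 : ℝ) * Φ t i j ^ 1 * ((-((Cα / t) • (A t * Φ t))) i j) with hDdef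
  have hgnonneg : ∀ t, 0 ≤ g t := fun t =>
    Finset.sum_nonneg fun i _ => Finset.sum_nonneg fun j _ => sq_nonneg _
  -- derivative of entries
  have hentry : ∀ t ∈ Set.Ici s, ∀ i j : Fin k,
      HasDerivWithinAt (fun u => Φ u i j) ((-((Cα / t) • (A t * Φ t))) i j) (Set.Ici s) t := by
    intro t ht i j
    exact (entryCLM k i j).hasFDerivAt.comp_hasDerivWithinAt t (hΦ t ht)
  -- derivative of g
  have hgderiv : ∀ t ∈ Set.Ici s, HasDerivWithinAt g (D t) (Set.Ici s) t := by
    intro t ht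
    exact HasDerivWithinAt.fun_sum fun i _ =>
      HasDerivWithinAt.fun_sum fun j _ => (hentry t ht i j).pow 2
  -- the key differential inequality D t ≤ -(p/t) * g t
  have key : ∀ t ∈ Set.Ici s, D t ≤ -(p / t) * g t := by
    intro t ht
    have ht1 : (1 : ℝ) ≤ t := le_trans hs ht
    have ht0 : (0 : ℝ) < t := lt_of_lt_of_le one_pos ht1
    set S : ℝ := ∑ j, ∑ i, ∑ l, Φ t i j * A t i l * Φ t l j with hS
    have hCg : C * g t ≤ S := by
      have hswap : g t = ∑ j, ∑ i, Φ t i j ^ 2 := Finset.sum_comm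
      rw [hswap, Finset.mul_sum]
      apply Finset.sum_le_sum
      intro j _
      have hz := hA t ht1 ((WithLp.equiv 2 (Fin k → ℝ)).symm (fun i => Φ t i j))
      have hnorm : ‖(WithLp.equiv 2 (Fin k → ℝ)).symm (fun i => Φ t i j)‖ ^ 2
          = ∑ i, Φ t i j ^ 2 := by
        rw [EuclideanSpace.norm_eq, Real.sq_sqrt (Finset.sum_nonneg fun i _ => sq_nonneg _)]
        simp [Real.norm_eq_abs, sq_abs]
      rw [hnorm] at hz
      simpa using hz
    have hDeq : D t = -(2 * Cα / t) * S := by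
      simp only [hDdef]
      rw [Finset.sum_comm]
      rw [hS, Finset.mul_sum]
      refine Finset.sum_congr rfl fun j _ => ?_
      rw [Finset.mul_sum]
      refine Finset.sum_congr rfl fun i _ => ?_
      rw [Matrix.neg_apply, Matrix.smul_apply, Matrix.mul_apply, smul_eq_mul,
        Finset.mul_sum, Finset.mul_sum]
      rw [mul_neg, Finset.mul_sum, ← Finset.sum_neg_distrib]
      exact Finset.sum_congr rfl fun l _ => by ring
    rw [hDeq]
    have h2 : (0 : ℝ) < 2 * Cα / t := by positivity
    have := mul_le_mul_of_nonneg_left hCg h2.le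
    have heq : -(p / t) * g t = -((2 * Cα / t) * (C * g t)) := by
      rw [hp]; ring
    rw [heq, neg_mul]
    linarith
  -- the Lyapunov function F t = t^p * g t is antitone on [s, ∞)
  set F : ℝ → ℝ := fun t => t ^ p * g t with hF
  have hFd : ∀ x ∈ Set.Ioi s, HasDerivAt F (p * x ^ (p - 1) * g x + x ^ p * D x) x := by
    intro x hx
    have hxs : s < x := hx
    have hx0 : (0 : ℝ) < x := lt_trans hs0 hxs
    have hmem : Set.Ici s ∈ nhds x := Ici_mem_nhds hxs
    have hgx : HasDerivAt g (D x) x := (hgderiv x (le_of_lt hxs)).hasDerivAt hmem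
    have hr : HasDerivAt (fun y : ℝ => y ^ p) (p * x ^ (p - 1)) x :=
      Real.hasDerivAt_rpow_const (Or.inl hx0.ne')
    exact hr.mul hgx
  have hanti : AntitoneOn F (Set.Ici s) := by
    apply antitoneOn_of_deriv_nonpos (convex_Ici s)
    · intro x hx
      have : ContinuousWithinAt g (Set.Ici s) x := (hgderiv x hx).continuousWithinAt
      exact ContinuousWithinAt.mul
        ((Real.continuousAt_rpow_const x p
          (Or.inl (lt_of_lt_of_le hs0 hx).ne')).continuousWithinAt) this
    · rw [interior_Ici]
      intro x hx
      exact ((hFd x hx).differentiableAt).differentiableWithinAt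
    · rw [interior_Ici]
      intro x hx
      rw [(hFd x hx).deriv]
      have hxs : s < x := hx
      have hx0 : (0 : ℝ) < x := lt_trans hs0 hxs
      have hDle := key x (le_of_lt hxs)
      have hxp : (0 : ℝ) < x ^ p := Real.rpow_pos_of_pos hx0 p
      have h1 : x ^ p * D x ≤ x ^ p * (-(p / x) * g x) :=
        mul_le_mul_of_nonneg_left hDle hxp.le
      have h2 : x ^ (p - 1) = x ^ p / x := by
        rw [Real.rpow_sub hx0, Real.rpow_one]
      rw [h2]
      have : p * (x ^ p / x) * g x + x ^ p * (-(p / x) * g x) = 0 := by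
        field_simp
        ring
      linarith
  -- value at s
  have hgs : g s = (k : ℝ) := by
    rw [hgdef]
    simp only [hΦs, Matrix.one_apply, ite_pow, one_pow]
    simp [Finset.sum_ite_eq]
  -- conclude
  intro t ht
  have ht1 : (1 : ℝ) ≤ t := le_trans hs ht
  have ht0 : (0 : ℝ) < t := lt_of_lt_of_le one_pos ht1
  have hFle : F t ≤ F s := hanti Set.self_mem_Ici ht ht
  have htp : (0 : ℝ) < t ^ p := Real.rpow_pos_of_pos ht0 p
  have hdiv : (s / t) ^ p = s ^ p / t ^ p := Real.div_rpow hs0.le ht0.le p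
  have hnorm : ‖Φ t‖ ^ 2 = g t := by
    rw [Matrix.frobenius_norm_def]
    have hX : (0 : ℝ) ≤ ∑ i, ∑ j, ‖Φ t i j‖ ^ (2 : ℝ) :=
      Finset.sum_nonneg fun i _ => Finset.sum_nonneg fun j _ => Real.rpow_nonneg (norm_nonneg _) _
    rw [← Real.rpow_natCast (((∑ i, ∑ j, ‖Φ t i j‖ ^ (2:ℝ))) ^ ((1:ℝ)/2)) 2,
      ← Real.rpow_mul hX]
    norm_num
    rfl
  rw [hnorm, hdiv]
  have : t ^ p * g t ≤ s ^ p * (k : ℝ) := by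
    have := hFle
    rw [hF] at this
    simpa [hgs] using this
  rw [mul_div_assoc']
  rw [le_div_iff₀ htp]
  calc g t * t ^ p = t ^ p * g t := by ring
    _ ≤ s ^ p * (k : ℝ) := this
    _ = (k : ℝ) * s ^ p := by ring
end

section
/- Let k ≥ 1, C > 0, C_α > 0 with 2 C C_α > 1, let A be a symmetric real k×k matrix with zᵀ A z ≥ C‖z‖² for all z ∈ ℝ^k, and let H be any real k×k matrix. Then the function u ↦ e^{u} exp(−C_α u A) · H · exp(−C_α u A) is Bochner integrable on [0, ∞), and, writing Σ̄ = C_α² ∫_0^∞ e^{u} exp(−C_α u A) · H · exp(−C_α u A) du, one has lim_{t→∞} t ∫_1^t (C_α/s)² exp(−C_α log(t/s) A) · H · exp(−C_α log(t/s) A) ds = Σ̄. -/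
attribute [local instance] Matrix.frobeniusNormedAddCommGroup Matrix.frobeniusNormedSpace

open NormedSpace MeasureTheory

section stmt4Aux

attribute [local instance] Matrix.frobeniusNormedRing Matrix.frobeniusNormedAlgebra

theorem stmt4_decay (k : ℕ) (C Cα : ℝ) (hCα : 0 < Cα)
    (A : Matrix (Fin k) (Fin k) ℝ)
    (hA : ∀ z : EuclideanSpace ℝ (Fin k), C * ‖z‖ ^ 2 ≤ ∑ i, ∑ j, z i * A i j * z j)
    (x : Fin k → ℝ) {u : ℝ} (hu : 0 ≤ u) :
    ∑ i, ((exp ((-(Cα * u)) • A)).mulVec x i) ^ 2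
      ≤ Real.exp (-(2 * Cα * C * u)) * ∑ i, (x i) ^ 2 := by
  classical
  set B : Matrix (Fin k) (Fin k) ℝ := (-Cα) • A with hB
  have hBu : ∀ v : ℝ, (-(Cα * v)) • A = v • B := by
    intro v; rw [hB, smul_smul]; ring_nf
  simp only [hBu] 
  set f : ℝ → Fin k → ℝ := fun v => (exp (v • B)).mulVec x with hf
  -- quadratic form bound in coordinates
  have hquad : ∀ z : Fin k → ℝ,
      C * ∑ i, (z i) ^ 2 ≤ ∑ i, ∑ j, z i * A i j * z j := by
    intro z
    have := hA ((WithLp.equiv 2 (Fin k → ℝ)).symm z)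
    have hnorm : ‖(WithLp.equiv 2 (Fin k → ℝ)).symm z‖ ^ 2 = ∑ i, (z i) ^ 2 := by
      rw [EuclideanSpace.norm_eq]
      rw [Real.sq_sqrt (by positivity)]
      simp [Real.norm_eq_abs, sq_abs]
    rw [hnorm] at this
    simpa using this
  -- derivative of each component
  have hfd : ∀ (i : Fin k) (v : ℝ),
      HasDerivAt (fun w => f w i) ((B.mulVec (f v)) i) v := by
    intro i v
    have hE : HasDerivAt (fun w : ℝ => exp (w • B)) (B * exp (v • B)) v :=
      hasDerivAt_exp_smul_const' B v
    let L : Matrix (Fin k) (Fin k) ℝ →ₗ[ℝ] ℝ :=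
      { toFun := fun M => M.mulVec x i
        map_add' := by intro M N; simp [Matrix.add_mulVec]
        map_smul' := by intro c M; simp [Matrix.smul_mulVec] }
    have := (L.toContinuousLinearMap.hasFDerivAt (x := exp (v • B))).comp_hasDerivAt v hE
    have h2 : ((B * exp (v • B)).mulVec x) i = (B.mulVec (f v)) i := by
      rw [hf]; simp [← Matrix.mulVec_mulVec]
    exact this.congr_deriv h2
  set g : ℝ → ℝ := fun v => ∑ i, (f v i) ^ 2 with hg
  have hgd : ∀ v : ℝ, HasDerivAt g (∑ i, 2 * f v i * (B.mulVec (f v)) i) v := by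
    intro v
    have := HasDerivAt.sum (u := Finset.univ) (fun i _ => ((hfd i v).pow 2))
    have hgf : g = ∑ i, (fun w => f w i) ^ 2 := by ext w; simp [hg]
    rw [hgf]
    exact this.congr_deriv (by norm_num)
  have hgd' : ∀ v : ℝ, ∑ i, 2 * f v i * (B.mulVec (f v)) i ≤ -(2 * Cα * C) * g v := by
    intro v
    have : ∑ i, 2 * f v i * (B.mulVec (f v)) i
        = (-(2 * Cα)) * ∑ i, ∑ j, f v i * A i j * f v j := by
      simp only [Matrix.mulVec, dotProduct, hB, Matrix.smul_apply, smul_eq_mul,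
        Finset.mul_sum, Finset.sum_mul]
      congr 1; ext i; congr 1; ext j; ring
    rw [this]
    have h1 := hquad (f v)
    have h2 : (0:ℝ) < 2 * Cα := by linarith
    nlinarith [h1]
  set c : ℝ := 2 * Cα * C with hc
  set h : ℝ → ℝ := fun v => g v * Real.exp (c * v) with hh
  have hhd : ∀ v : ℝ, HasDerivAt h
      ((∑ i, 2 * f v i * (B.mulVec (f v)) i) * Real.exp (c * v)
        + g v * (Real.exp (c * v) * (c * 1))) v := by
    intro v
    exact (hgd v).mul (((hasDerivAt_id v).const_mul c).exp)
  have hderiv_nonpos : ∀ v : ℝ, deriv h v ≤ 0 := by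
    intro v
    rw [(hhd v).deriv]
    have e1 := Real.exp_pos (c * v)
    have e2 := hgd' v
    have hg0 : 0 ≤ g v := Finset.sum_nonneg fun i _ => sq_nonneg _
    nlinarith
  have hanti : AntitoneOn h (Set.Ici (0:ℝ)) := by
    apply antitoneOn_of_deriv_nonpos (convex_Ici 0)
    · exact fun v _ => (hhd v).continuousAt.continuousWithinAt
    · exact fun v _ => (hhd v).differentiableAt.differentiableWithinAt
    · exact fun v _ => hderiv_nonpos v
  have key : h u ≤ h 0 := hanti Set.self_mem_Ici hu hu
  have hf0 : f 0 = x := by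
    rw [hf]; simp [Matrix.one_mulVec]
  have h0 : h 0 = ∑ i, (x i) ^ 2 := by
    simp [hh, hg, hf0]
  rw [h0] at key
  have e1 : Real.exp (-(c * u)) * Real.exp (c * u) = 1 := by
    rw [← Real.exp_add]; simp
  have e2 := Real.exp_pos (-(c * u))
  have e3 := Real.exp_pos (c * u)
  show g u ≤ Real.exp (-(c * u)) * ∑ i, (x i) ^ 2
  have key2 : h u = g u * Real.exp (c * u) := rfl
  rw [key2] at key
  calc g u = (g u * Real.exp (c * u)) * Real.exp (-(c * u)) := by
        rw [mul_assoc, mul_comm (Real.exp (c * u)), e1, mul_one]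
    _ ≤ (∑ i, (x i) ^ 2) * Real.exp (-(c * u)) := mul_le_mul_of_nonneg_right key e2.le
    _ = Real.exp (-(c * u)) * ∑ i, (x i) ^ 2 := mul_comm _ _

theorem stmt4_norm_sq (k : ℕ) (C Cα : ℝ) (hCα : 0 < Cα)
    (A : Matrix (Fin k) (Fin k) ℝ)
    (hA : ∀ z : EuclideanSpace ℝ (Fin k), C * ‖z‖ ^ 2 ≤ ∑ i, ∑ j, z i * A i j * z j)
    {u : ℝ} (hu : 0 ≤ u) :
    ‖exp ((-(Cα * u)) • A)‖ ^ 2 ≤ (k : ℝ) * Real.exp (-(2 * Cα * C * u)) := by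
  classical
  set E := exp ((-(Cα * u)) • A) with hE
  have hsq : ‖E‖ ^ 2 = ∑ i, ∑ j, (E i j) ^ 2 := by
    rw [Matrix.frobenius_norm_def,
      ← Real.rpow_natCast ((∑ i, ∑ j, ‖E i j‖ ^ (2:ℝ)) ^ (1/2 : ℝ)) 2,
      ← Real.rpow_mul (by positivity)]
    norm_num

  have hcol : ∀ j, ∑ i, (E i j) ^ 2 ≤ Real.exp (-(2 * Cα * C * u)) := by
    intro j
    have hdec := stmt4_decay k C Cα hCα A hA (Pi.single j (1:ℝ)) hu
    have h1 : ∀ i, (E.mulVec (Pi.single j (1:ℝ))) i = E i j := by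
      intro i; rw [Matrix.mulVec_single]; simp
    have h2 : ∑ i, ((Pi.single j (1:ℝ) : Fin k → ℝ) i) ^ 2 = 1 := by
      simp [Pi.single_apply, apply_ite (· ^ (2:ℕ))]
    rw [← hE] at hdec
    simp_rw [h1, h2, mul_one] at hdec
    exact hdec
  rw [hsq, Finset.sum_comm]
  calc ∑ j, ∑ i, (E i j) ^ 2 ≤ ∑ _j : Fin k, Real.exp (-(2 * Cα * C * u)) :=
        Finset.sum_le_sum fun j _ => hcol j
    _ = (k : ℝ) * Real.exp (-(2 * Cα * C * u)) := by
        rw [Finset.sum_const]; simp [mul_comm]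

theorem stmt4_cont (k : ℕ) (Cα : ℝ) (A H : Matrix (Fin k) (Fin k) ℝ) :
    Continuous (fun u : ℝ => exp ((-(Cα * u)) • A) * H * exp ((-(Cα * u)) • A)) := by
  have h1 : Continuous (fun u : ℝ => exp ((-(Cα * u)) • A)) :=
    exp_continuous.comp (((continuous_const.mul continuous_id).neg).smul continuous_const)
  exact (h1.mul continuous_const).mul h1

theorem stmt4_bound (k : ℕ) (C Cα : ℝ) (hCα : 0 < Cα)
    (A : Matrix (Fin k) (Fin k) ℝ)
    (hA : ∀ z : EuclideanSpace ℝ (Fin k), C * ‖z‖ ^ 2 ≤ ∑ i, ∑ j, z i * A i j * z j)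
    (H : Matrix (Fin k) (Fin k) ℝ) {u : ℝ} (hu : 0 ≤ u) :
    ‖Real.exp u • (exp ((-(Cα * u)) • A) * H * exp ((-(Cα * u)) • A))‖
      ≤ (k : ℝ) * ‖H‖ * Real.exp ((1 - 2 * Cα * C) * u) := by
  set E := exp ((-(Cα * u)) • A) with hE
  have hEsq := stmt4_norm_sq k C Cα hCα A hA hu
  rw [← hE] at hEsq
  have h1 : ‖E * H * E‖ ≤ ‖E‖ ^ 2 * ‖H‖ := by
    calc ‖E * H * E‖ ≤ ‖E * H‖ * ‖E‖ := norm_mul_le _ _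
      _ ≤ ‖E‖ * ‖H‖ * ‖E‖ :=
          mul_le_mul_of_nonneg_right (norm_mul_le _ _) (norm_nonneg _)
      _ = ‖E‖ ^ 2 * ‖H‖ := by ring
  rw [norm_smul, Real.norm_eq_abs, abs_of_pos (Real.exp_pos u)]
  calc Real.exp u * ‖E * H * E‖
      ≤ Real.exp u * (((k : ℝ) * Real.exp (-(2 * Cα * C * u))) * ‖H‖) := by
        apply mul_le_mul_of_nonneg_left _ (Real.exp_pos u).le
        exact le_trans h1 (mul_le_mul_of_nonneg_right hEsq (norm_nonneg _))
    _ = (k : ℝ) * ‖H‖ * (Real.exp u * Real.exp (-(2 * Cα * C * u))) := by ring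
    _ = (k : ℝ) * ‖H‖ * Real.exp ((1 - 2 * Cα * C) * u) := by
        rw [← Real.exp_add]; ring_nf

theorem stmt4_int (k : ℕ) (C Cα : ℝ) (hC : 0 < C) (hCα : 0 < Cα)
    (h2 : 1 < 2 * C * Cα)
    (A : Matrix (Fin k) (Fin k) ℝ)
    (hA : ∀ z : EuclideanSpace ℝ (Fin k), C * ‖z‖ ^ 2 ≤ ∑ i, ∑ j, z i * A i j * z j)
    (H : Matrix (Fin k) (Fin k) ℝ) :
    @IntegrableOn _ _ _ _ SeminormedAddGroup.toContinuousENorm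
      (fun u : ℝ => Real.exp u • (exp ((-(Cα * u)) • A) * H * exp ((-(Cα * u)) • A)))
      (Set.Ici 0) volume := by
  have hb : (0:ℝ) < 2 * Cα * C - 1 := by nlinarith
  have hint : IntegrableOn
      (fun u : ℝ => (k : ℝ) * ‖H‖ * Real.exp ((1 - 2 * Cα * C) * u)) (Set.Ici 0) := by
    have he : ∀ u : ℝ, (1 - 2 * Cα * C) * u = -(2 * Cα * C - 1) * u := fun u => by ring
    simp_rw [he]
    rw [integrableOn_Ici_iff_integrableOn_Ioi]
    exact (exp_neg_integrableOn_Ioi 0 hb).const_mul _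
  apply Integrable.mono' hint
  · exact AEStronglyMeasurable.restrict
      (Continuous.aestronglyMeasurable (by exact Real.continuous_exp.smul (stmt4_cont k Cα A H)))
  · exact (ae_restrict_iff' measurableSet_Ici).mpr
      (Filter.Eventually.of_forall fun u hu => stmt4_bound k C Cα hCα A hA H hu)

noncomputable def stmt4F (k : ℕ) (Cα : ℝ) (A H : Matrix (Fin k) (Fin k) ℝ) (u : ℝ) :
    Matrix (Fin k) (Fin k) ℝ :=
  exp ((-(Cα * u)) • A) * H * exp ((-(Cα * u)) • A)

theorem stmt4_change (k : ℕ) (Cα : ℝ) (A H : Matrix (Fin k) (Fin k) ℝ)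
    {t : ℝ} (ht : 1 < t) :
    t • ∫ s in (1:ℝ)..t, ((Cα / s) ^ 2) • stmt4F k Cα A H (Real.log (t / s))
      = (Cα ^ 2) • ∫ u in (0:ℝ)..Real.log t, Real.exp u • stmt4F k Cα A H u := by
  have ht0 : (0:ℝ) < t := lt_trans one_pos ht
  set G : ℝ → Matrix (Fin k) (Fin k) ℝ :=
    fun u => -((Cα ^ 2 / t) • (Real.exp u • stmt4F k Cα A H u)) with hG
  have hFc : Continuous (stmt4F k Cα A H) := stmt4_cont k Cα A H
  have hGc : Continuous G := by rw [hG]; fun_prop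
  have key : ∫ s in (1:ℝ)..t, ((Cα / s) ^ 2) • stmt4F k Cα A H (Real.log (t / s))
      = ∫ s in (1:ℝ)..t, (-s⁻¹) • G (Real.log t - Real.log s) := by
    apply intervalIntegral.integral_congr
    intro s hs
    rw [Set.uIcc_of_le ht.le] at hs
    have hs0 : (0:ℝ) < s := lt_of_lt_of_le one_pos hs.1
    have hlog : Real.log (t / s) = Real.log t - Real.log s :=
      Real.log_div (ne_of_gt ht0) (ne_of_gt hs0)
    have hexp : Real.exp (Real.log t - Real.log s) = t / s := by
      rw [Real.exp_sub, Real.exp_log ht0, Real.exp_log hs0]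
    show (Cα / s) ^ 2 • stmt4F k Cα A H (Real.log (t / s))
        = (-s⁻¹) • G (Real.log t - Real.log s)
    rw [hlog]
    simp only [hG]
    rw [smul_neg, neg_smul, neg_neg, smul_smul, smul_smul, hexp]
    congr 1
    field_simp
  have hd : ∀ x ∈ Set.uIcc (1:ℝ) t,
      HasDerivAt (fun s => Real.log t - Real.log s) (-x⁻¹) x := by
    intro x hx
    rw [Set.uIcc_of_le ht.le] at hx
    have hx0 : (0:ℝ) < x := lt_of_lt_of_le one_pos hx.1
    simpa using (Real.hasDerivAt_log (ne_of_gt hx0)).const_sub (Real.log t)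
  have hc : ContinuousOn (fun x : ℝ => -x⁻¹) (Set.uIcc (1:ℝ) t) := by
    apply ContinuousOn.neg
    apply ContinuousOn.inv₀ continuousOn_id
    intro x hx
    rw [Set.uIcc_of_le ht.le] at hx
    exact ne_of_gt (lt_of_lt_of_le one_pos hx.1)
  have sub := intervalIntegral.integral_comp_smul_deriv hd hc hGc
  simp only [Function.comp] at sub
  rw [key, sub, Real.log_one, sub_zero, sub_self,
    intervalIntegral.integral_symm 0 (Real.log t), hG]
  rw [intervalIntegral.integral_neg, neg_neg, intervalIntegral.integral_smul, smul_smul,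
    mul_div_cancel₀ _ (ne_of_gt ht0)]

end stmt4Aux

/-- Bochner integrability on `[0,∞)` of
`u ↦ e^u exp(−C_α u A) H exp(−C_α u A)` when `2CC_α > 1` and `A ≥ C > 0`, and convergence of
the finite-horizon covariance `t ∫_1^t α_s² Φ*_{t,s} H Φ*_{t,s} ds` (with `α_s = C_α/s`,
`Φ*_{t,s} = exp(−C_α log(t/s) A)`) to `Σ̄ = C_α² ∫_0^∞ e^u exp(−C_α u A) H exp(−C_α u A) du`. -/
theorem stmt4 (k : ℕ) (hk : 1 ≤ k) (C Cα : ℝ) (hC : 0 < C) (hCα : 0 < Cα)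
    (h2 : 1 < 2 * C * Cα)
    (A : Matrix (Fin k) (Fin k) ℝ) (hAsymm : A.IsSymm)
    (hA : ∀ z : EuclideanSpace ℝ (Fin k), C * ‖z‖ ^ 2 ≤ ∑ i, ∑ j, z i * A i j * z j)
    (H : Matrix (Fin k) (Fin k) ℝ) :
    @IntegrableOn _ _ _ _ SeminormedAddGroup.toContinuousENorm
      (fun u : ℝ => Real.exp u • (exp ((-(Cα * u)) • A) * H * exp ((-(Cα * u)) • A)))
      (Set.Ici 0) volume ∧
    Filter.Tendsto
      (fun t : ℝ => t •
        ∫ s in (1 : ℝ)..t, ((Cα / s) ^ 2) •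
          (exp ((-(Cα * Real.log (t / s))) • A) * H * exp ((-(Cα * Real.log (t / s))) • A)))
      Filter.atTop
      (nhds ((Cα ^ 2) •
        ∫ u in Set.Ici (0 : ℝ),
          Real.exp u • (exp ((-(Cα * u)) • A) * H * exp ((-(Cα * u)) • A)))) := by
  have hint : @IntegrableOn _ _ _ _ SeminormedAddGroup.toContinuousENorm
      (fun u : ℝ => Real.exp u • stmt4F k Cα A H u) (Set.Ici 0) volume :=
    stmt4_int k C Cα hC hCα h2 A hA H
  refine ⟨hint, ?_⟩
  have hIoi : @IntegrableOn _ _ _ _ SeminormedAddGroup.toContinuousENorm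
      (fun u : ℝ => Real.exp u • stmt4F k Cα A H u) (Set.Ioi 0) volume :=
    (integrableOn_Ici_iff_integrableOn_Ioi (hb := by finiteness)).mp hint
  have htend : Filter.Tendsto
      (fun t : ℝ => ∫ u in (0:ℝ)..Real.log t, Real.exp u • stmt4F k Cα A H u)
      Filter.atTop (nhds (∫ u in Set.Ioi (0:ℝ), Real.exp u • stmt4F k Cα A H u)) :=
    MeasureTheory.intervalIntegral_tendsto_integral_Ioi 0 hIoi Real.tendsto_log_atTop
  have htend2 : Filter.Tendsto
      (fun t : ℝ => (Cα ^ 2) • ∫ u in (0:ℝ)..Real.log t, Real.exp u • stmt4F k Cα A H u)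
      Filter.atTop
      (nhds ((Cα ^ 2) • ∫ u in Set.Ici (0:ℝ), Real.exp u • stmt4F k Cα A H u)) := by
    rw [MeasureTheory.integral_Ici_eq_integral_Ioi]
    exact htend.const_smul _
  show Filter.Tendsto
      (fun t : ℝ => t • ∫ s in (1:ℝ)..t, ((Cα / s) ^ 2) • stmt4F k Cα A H (Real.log (t / s)))
      Filter.atTop
      (nhds ((Cα ^ 2) • ∫ u in Set.Ici (0:ℝ), Real.exp u • stmt4F k Cα A H u))
  apply htend2.congr'
  filter_upwards [Filter.eventually_gt_atTop (1:ℝ)] with t ht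
  exact (stmt4_change k Cα A H ht).symm
end

section
/- Let g : ℝ^k → ℝ be twice continuously differentiable and strongly convex with constant C > 0, i.e. zᵀ ∇²g(θ) z ≥ C ‖z‖² for all θ, z ∈ ℝ^k, and let θ* ∈ ℝ^k satisfy ∇g(θ*) = 0. Let C_α, C_0 > 0 and set α_t = C_α/(C_0 + t). If θ : [0, ∞) → ℝ^k is differentiable and satisfies the deterministic gradient descent equation θ′(t) = −α_t ∇g(θ(t)) for all t ≥ 0, then for all t ≥ 0, ‖θ(t) − θ*‖ ≤ (C_0/(C_0 + t))^{C C_α} ‖θ(0) − θ*‖; in particular there is a constant K < ∞ with ‖θ(t) − θ*‖ ≤ K t^{−C C_α} for all t ≥ 1. -/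
open RealInnerProductSpace

theorem strongMono (k : ℕ) (C : ℝ) (g : EuclideanSpace ℝ (Fin k) → ℝ) (hg : ContDiff ℝ 2 g)
    (hconv : ∀ θv z : EuclideanSpace ℝ (Fin k),
      C * ‖z‖ ^ 2 ≤ ⟪(fderiv ℝ (gradient g) θv) z, z⟫)
    (x y : EuclideanSpace ℝ (Fin k)) :
    C * ‖x - y‖ ^ 2 ≤ ⟪gradient g x - gradient g y, x - y⟫ := by
  have hgrad : ContDiff ℝ 1 (gradient g) := by
    have h1 : ContDiff ℝ 1 (fderiv ℝ g) := hg.fderiv_right (by norm_num)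
    exact (InnerProductSpace.toDual ℝ _).symm.contDiff.comp h1
  set v := x - y with hv
  set ψ : ℝ → ℝ := fun s => ⟪gradient g (y + s • v), v⟫ - C * ‖v‖ ^ 2 * s with hψ
  have hline : ∀ s : ℝ, HasDerivAt (fun s : ℝ => y + s • v) v s := fun s => by
    simpa using ((hasDerivAt_id s).smul_const v).const_add y
  have hd : ∀ s : ℝ, HasDerivAt ψ
      (⟪(fderiv ℝ (gradient g) (y + s • v)) v, v⟫ - C * ‖v‖ ^ 2) s := by
    intro s
    have h2 : HasFDerivAt (gradient g) (fderiv ℝ (gradient g) (y + s • v)) (y + s • v) :=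
      (hgrad.differentiable one_ne_zero).differentiableAt.hasFDerivAt
    have h3 : HasDerivAt (fun s : ℝ => gradient g (y + s • v))
        ((fderiv ℝ (gradient g) (y + s • v)) v) s := h2.comp_hasDerivAt (f := fun s : ℝ => y + s • v) s (hline s)
    have h4 : HasDerivAt (fun s : ℝ => ⟪gradient g (y + s • v), v⟫)
        (⟪(fderiv ℝ (gradient g) (y + s • v)) v, v⟫) s := by
      simpa using (h3.inner ℝ (hasDerivAt_const s v))
    have h5 := h4.sub (((hasDerivAt_id s).const_mul (C * ‖v‖ ^ 2)))
    rw [mul_one] at h5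
    exact h5
  have hmono : Monotone ψ := by
    apply monotone_of_deriv_nonneg
    · exact fun s => (hd s).differentiableAt
    · intro s
      rw [(hd s).deriv]
      have := hconv (y + s • v) v
      linarith
  have h01 := hmono (show (0:ℝ) ≤ 1 by norm_num)
  simp only [hψ] at h01
  have e0 : y + (0:ℝ) • v = y := by simp
  have e1 : y + (1:ℝ) • v = x := by simp [hv]
  rw [e0, e1] at h01
  rw [inner_sub_left]
  linarith

/-- Convergence of deterministic continuous-time gradient descent
`θ′(t) = −α_t ∇g(θ(t))`, `α_t = C_α/(C_0+t)`, for a `C`-strongly convex `C²` objective `g`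
with critical point `θ*`:
`‖θ(t) − θ*‖ ≤ (C_0/(C_0+t))^{CC_α} ‖θ(0) − θ*‖`, hence `‖θ(t) − θ*‖ ≤ K t^{−CC_α}` on `[1,∞)`. -/
theorem stmt6 (k : ℕ) (hk : 1 ≤ k) (C Cα C₀ : ℝ) (hC : 0 < C) (hCα : 0 < Cα) (hC₀ : 0 < C₀)
    (g : EuclideanSpace ℝ (Fin k) → ℝ) (hg : ContDiff ℝ 2 g)
    (hconv : ∀ θv z : EuclideanSpace ℝ (Fin k),
      C * ‖z‖ ^ 2 ≤ ⟪(fderiv ℝ (gradient g) θv) z, z⟫)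
    (θstar : EuclideanSpace ℝ (Fin k)) (hcrit : gradient g θstar = 0)
    (θ : ℝ → EuclideanSpace ℝ (Fin k))
    (hθ : ∀ t ∈ Set.Ici (0 : ℝ),
      HasDerivWithinAt θ (-((Cα / (C₀ + t)) • gradient g (θ t))) (Set.Ici (0 : ℝ)) t) :
    (∀ t ∈ Set.Ici (0 : ℝ),
      ‖θ t - θstar‖ ≤ (C₀ / (C₀ + t)) ^ (C * Cα) * ‖θ 0 - θstar‖) ∧
    ∃ K : ℝ, ∀ t ≥ (1 : ℝ), ‖θ t - θstar‖ ≤ K * t ^ (-(C * Cα)) := by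
  set e : ℝ := 2 * (C * Cα) with he
  set u : ℝ → EuclideanSpace ℝ (Fin k) := fun t => θ t - θstar with hu
  set f : ℝ → ℝ := fun t => ⟪u t, u t⟫ with hf
  set D : ℝ → EuclideanSpace ℝ (Fin k) := fun t => -((Cα / (C₀ + t)) • gradient g (θ t)) with hD
  set b : ℝ → ℝ := fun t => (C₀ + t) / C₀ with hb
  set φ : ℝ → ℝ := fun t => b t ^ e * f t with hφ
  have hct : ∀ t ∈ Set.Ici (0:ℝ), 0 < C₀ + t := fun t ht =>
    add_pos_of_pos_of_nonneg hC₀ ht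
  have hbpos : ∀ t ∈ Set.Ici (0:ℝ), 0 < b t := fun t ht => div_pos (hct t ht) hC₀
  have hfnn : ∀ t, 0 ≤ f t := fun t => real_inner_self_nonneg
  have hfval : ∀ t, f t = ‖u t‖ ^ 2 := fun t => real_inner_self_eq_norm_sq (u t)
  -- derivative of φ
  set φ' : ℝ → ℝ := fun t => (1 / C₀ * e * b t ^ (e - 1)) * f t + b t ^ e * (⟪u t, D t⟫ + ⟪D t, u t⟫)
    with hφ'
  have hdφ : ∀ t ∈ Set.Ici (0:ℝ), HasDerivWithinAt φ (φ' t) (Set.Ici (0:ℝ)) t := by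
    intro t ht
    have hud : HasDerivWithinAt u (D t) (Set.Ici (0:ℝ)) t := (hθ t ht).sub_const θstar
    have hfd : HasDerivWithinAt f (⟪u t, D t⟫ + ⟪D t, u t⟫) (Set.Ici (0:ℝ)) t := hud.inner ℝ hud
    have hbd : HasDerivWithinAt b (1 / C₀) (Set.Ici (0:ℝ)) t := by
      simpa [hb] using (((hasDerivWithinAt_id t (Set.Ici (0:ℝ))).const_add C₀).div_const C₀)
    have hBd : HasDerivWithinAt (fun t => b t ^ e) (1 / C₀ * e * b t ^ (e - 1))
        (Set.Ici (0:ℝ)) t := hbd.rpow_const (Or.inl (hbpos t ht).ne')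
    exact hBd.mul hfd
  -- φ' ≤ 0 on Ici 0
  have hφ'le : ∀ t ∈ Set.Ici (0:ℝ), φ' t ≤ 0 := by
    intro t ht
    have hα : 0 < Cα / (C₀ + t) := div_pos hCα (hct t ht)
    have hkey : ⟪u t, D t⟫ + ⟪D t, u t⟫ ≤ -(2 * (Cα / (C₀ + t)) * C * f t) := by
      have hsm := strongMono k C g hg hconv (θ t) θstar
      rw [hcrit, sub_zero] at hsm
      have hDval : ⟪D t, u t⟫ = -((Cα / (C₀ + t)) * ⟪gradient g (θ t), u t⟫) := by
        simp [hD, inner_smul_left]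
      have hsym : ⟪u t, D t⟫ = ⟪D t, u t⟫ := real_inner_comm _ _
      have h1 : (Cα / (C₀ + t)) * (C * ‖u t‖ ^ 2) ≤
          (Cα / (C₀ + t)) * ⟪gradient g (θ t), u t⟫ :=
        mul_le_mul_of_nonneg_left hsm hα.le
      rw [hsym, hDval, hfval]
      nlinarith [h1]
    have hBpos : (0:ℝ) < b t ^ e := Real.rpow_pos_of_pos (hbpos t ht) e
    have hB1nn : (0:ℝ) ≤ b t ^ (e - 1) := (Real.rpow_pos_of_pos (hbpos t ht) (e-1)).le
    have hsplit : b t ^ e = b t ^ (e - 1) * b t := by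
      rw [← Real.rpow_add_one (hbpos t ht).ne' (e-1)]; ring_nf
    have hcoef : 2 * (Cα / (C₀ + t)) * C * b t = e / C₀ := by
      show 2 * (Cα / (C₀ + t)) * C * ((C₀ + t) / C₀) = e / C₀
      field_simp [hb, he, (hct t ht).ne']
      ring
    have h2 : b t ^ e * (⟪u t, D t⟫ + ⟪D t, u t⟫) ≤
        b t ^ e * (-(2 * (Cα / (C₀ + t)) * C * f t)) :=
      mul_le_mul_of_nonneg_left hkey hBpos.le
    have h3 : b t ^ e * (-(2 * (Cα / (C₀ + t)) * C * f t))
        = -(1 / C₀ * e * b t ^ (e - 1) * f t) := by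
      rw [hsplit, show b t ^ (e-1) * b t * (-(2 * (Cα / (C₀ + t)) * C * f t))
          = -(b t ^ (e-1) * (2 * (Cα / (C₀ + t)) * C * b t) * f t) from by ring, hcoef]
      ring
    show (1 / C₀ * e * b t ^ (e - 1)) * f t + b t ^ e * (⟪u t, D t⟫ + ⟪D t, u t⟫) ≤ 0
    linarith [h2, h3.symm.le, h3.le]
  have hanti : AntitoneOn φ (Set.Ici 0) := by
    apply antitoneOn_of_deriv_nonpos (convex_Ici 0)
    · exact fun t ht => (hdφ t ht).continuousWithinAt
    · intro t ht
      rw [interior_Ici] at ht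
      exact ((hdφ t (Set.Ioi_subset_Ici_self ht)).hasDerivAt
        (Ici_mem_nhds ht)).differentiableAt.differentiableWithinAt
    · intro t ht
      rw [interior_Ici] at ht
      rw [((hdφ t (Set.Ioi_subset_Ici_self ht)).hasDerivAt (Ici_mem_nhds ht)).deriv]
      exact hφ'le t (Set.Ioi_subset_Ici_self ht)
  have hφ0 : φ 0 = f 0 := by simp [hφ, hb, div_self hC₀.ne']
  have hmain : ∀ t ∈ Set.Ici (0:ℝ),
      ‖θ t - θstar‖ ≤ (C₀ / (C₀ + t)) ^ (C * Cα) * ‖θ 0 - θstar‖ := by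
    intro t ht
    have h1 : b t ^ e * f t ≤ f 0 := hφ0 ▸ hanti (Set.self_mem_Ici) ht ht
    set r : ℝ := C₀ / (C₀ + t) with hr
    have hrpos : 0 < r := div_pos hC₀ (hct t ht)
    have hrb : r * b t = 1 := by
      rw [hr, hb, div_mul_div_comm, mul_comm, div_self (mul_pos (hct t ht) hC₀).ne']
    have h2 : r ^ e * (b t ^ e * f t) ≤ r ^ e * f 0 :=
      mul_le_mul_of_nonneg_left h1 (Real.rpow_pos_of_pos hrpos e).le
    have hone : r ^ e * b t ^ e = 1 := by
      rw [← Real.mul_rpow hrpos.le (hbpos t ht).le, hrb, Real.one_rpow]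
    rw [← mul_assoc, hone, one_mul] at h2
    have hs : Real.sqrt (f t) ≤ Real.sqrt (r ^ e * f 0) := Real.sqrt_le_sqrt h2
    rw [hfval, hfval, Real.sqrt_sq (norm_nonneg _), Real.sqrt_mul
      (Real.rpow_pos_of_pos hrpos e).le, Real.sqrt_sq (norm_nonneg _)] at hs
    have hsq : Real.sqrt (r ^ e) = r ^ (C * Cα) := by
      rw [Real.sqrt_eq_rpow, ← Real.rpow_mul hrpos.le, he]
      norm_num
      ring_nf
    rw [hsq] at hs
    exact hs
  refine ⟨hmain, ⟨C₀ ^ (C * Cα) * ‖θ 0 - θstar‖, ?_⟩⟩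
  intro t ht1
  have ht0 : (0:ℝ) < t := lt_of_lt_of_le one_pos ht1
  have h1 := hmain t ht0.le
  have h2 : (C₀ / (C₀ + t)) ^ (C * Cα) ≤ (C₀ / t) ^ (C * Cα) := by
    gcongr
    · linarith
  have h3 : (C₀ / t) ^ (C * Cα) = C₀ ^ (C * Cα) * t ^ (-(C * Cα)) := by
    rw [Real.div_rpow hC₀.le ht0.le, Real.rpow_neg ht0.le, div_eq_mul_inv]
  calc ‖θ t - θstar‖ ≤ (C₀ / (C₀ + t)) ^ (C * Cα) * ‖θ 0 - θstar‖ := h1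
    _ ≤ (C₀ / t) ^ (C * Cα) * ‖θ 0 - θstar‖ :=
        mul_le_mul_of_nonneg_right h2 (norm_nonneg _)
    _ = (C₀ ^ (C * Cα) * ‖θ 0 - θstar‖) * t ^ (-(C * Cα)) := by rw [h3]; ring
end

section
/- Let g : ℝ^k → ℝ be continuously differentiable and let θ* ∈ ℝ^k be the unique point with ∇g(θ*) = 0. Let θ : [1, ∞) → ℝ^k be continuous and suppose ‖∇g(θ(t))‖ → 0 as t → ∞. Then either θ(t) → θ* as t → ∞, or ‖θ(t)‖ → ∞ as t → ∞. -/
/-- Dichotomy along a continuous path whose gradient norm vanishes: if `g`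
is `C¹` with unique critical point `θ*`, `θ` is continuous on `[1,∞)` and
`‖∇g(θ(t))‖ → 0`, then either `θ(t) → θ*` or `‖θ(t)‖ → ∞`. -/
theorem stmt10 (k : ℕ) (hk : 1 ≤ k)
    (g : EuclideanSpace ℝ (Fin k) → ℝ) (hg : ContDiff ℝ 1 g)
    (θstar : EuclideanSpace ℝ (Fin k))
    (hunique : ∀ θv : EuclideanSpace ℝ (Fin k), gradient g θv = 0 ↔ θv = θstar)
    (θ : ℝ → EuclideanSpace ℝ (Fin k)) (hθ : ContinuousOn θ (Set.Ici 1))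
    (hgrad : Filter.Tendsto (fun t => ‖gradient g (θ t)‖) Filter.atTop (nhds 0)) :
    Filter.Tendsto θ Filter.atTop (nhds θstar) ∨
      Filter.Tendsto (fun t => ‖θ t‖) Filter.atTop Filter.atTop := by
  by_cases hdiv : Filter.Tendsto (fun t => ‖θ t‖) Filter.atTop Filter.atTop
  · exact Or.inr hdiv
  left
  rw [Filter.tendsto_atTop] at hdiv
  push_neg at hdiv
  obtain ⟨b, hb⟩ := hdiv
  -- continuity of the gradient
  have hcont : Continuous (fun x => gradient g x) := by
    have : (fun x => gradient g x) =
        (fun L => (InnerProductSpace.toDual ℝ (EuclideanSpace ℝ (Fin k))).symm L) ∘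
          (fun x => fderiv ℝ g x) := rfl
    rw [this]
    exact (InnerProductSpace.toDual ℝ _).symm.continuous.comp
      (hg.continuous_fderiv one_ne_zero)
  rw [Metric.tendsto_nhds]
  intro ε hε
  set R : ℝ := max b (‖θstar‖ + ε) with hRdef
  set A : Set (EuclideanSpace ℝ (Fin k)) :=
    Metric.closedBall 0 R \ Metric.ball θstar ε with hAdef
  have hAcomp : IsCompact A := (isCompact_closedBall _ _).diff Metric.isOpen_ball
  -- positive lower bound for the gradient norm on A
  have key : ∃ m > (0 : ℝ), ∀ x ∈ A, m ≤ ‖gradient g x‖ := by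
    rcases Set.eq_empty_or_nonempty A with hA | hA
    · exact ⟨1, one_pos, fun x hx => absurd hx (by simp [hA])⟩
    · obtain ⟨x0, hx0A, hmin⟩ := hAcomp.exists_isMinOn hA hcont.norm.continuousOn
      refine ⟨‖gradient g x0‖, ?_, fun x hx => hmin hx⟩
      have hx0ne : x0 ≠ θstar := by
        intro h
        have : x0 ∈ Metric.ball θstar ε := by
          simp [h, hε]
        exact hx0A.2 this
      have : gradient g x0 ≠ 0 := fun h => hx0ne ((hunique x0).mp h)
      simpa using norm_pos_iff.mpr this
  obtain ⟨m, hm, hmA⟩ := key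
  have hev : ∀ᶠ t in Filter.atTop, ‖gradient g (θ t)‖ < m :=
    hgrad.eventually_lt_const hm
  rw [Filter.eventually_atTop] at hev
  obtain ⟨T, hT⟩ := hev
  set T' : ℝ := max T 1 with hT'def
  have hθT' : ContinuousOn θ (Set.Ici T') :=
    hθ.mono (Set.Ici_subset_Ici.2 (le_max_right T 1))
  have hconn : IsPreconnected (θ '' Set.Ici T') :=
    (isPreconnected_Ici).image θ hθT'
  set U : Set (EuclideanSpace ℝ (Fin k)) := Metric.ball θstar ε with hUdef
  set V : Set (EuclideanSpace ℝ (Fin k)) :=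
    (Metric.closedBall 0 R)ᶜ with hVdef
  have hUopen : IsOpen U := Metric.isOpen_ball
  have hVopen : IsOpen V := Metric.isClosed_closedBall.isOpen_compl
  have hdisj : Disjoint U V := by
    rw [Set.disjoint_left]
    intro x hxU hxV
    apply hxV
    have : dist x θstar < ε := hxU
    have hxn : ‖x‖ ≤ ‖θstar‖ + ε := by
      calc ‖x‖ = ‖x - θstar + θstar‖ := by rw [sub_add_cancel]
        _ ≤ ‖x - θstar‖ + ‖θstar‖ := norm_add_le _ _
        _ ≤ ε + ‖θstar‖ := by
            have : ‖x - θstar‖ < ε := by rwa [← dist_eq_norm]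
            linarith
        _ = ‖θstar‖ + ε := by ring
    simp only [Metric.mem_closedBall, dist_zero_right]
    exact hxn.trans (le_max_right _ _)
  have hsub : θ '' Set.Ici T' ⊆ U ∪ V := by
    rintro x ⟨t, ht, rfl⟩
    have hlt : ‖gradient g (θ t)‖ < m := hT t (le_trans (le_max_left T 1) ht)
    have hnA : θ t ∉ A := fun hA' => absurd (hmA _ hA') (not_le.mpr hlt)
    by_cases hball : θ t ∈ Metric.ball θstar ε
    · exact Or.inl hball
    · right
      intro hcb
      exact hnA ⟨hcb, hball⟩
  rcases hconn.subset_or_subset hUopen hVopen hdisj hsub with hU | hV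
  · rw [Filter.eventually_atTop]
    refine ⟨T', fun t ht => ?_⟩
    have : θ t ∈ U := hU ⟨t, ht, rfl⟩
    exact this
  · -- contradiction with frequently bounded
    exfalso
    obtain ⟨t, ht, htb⟩ := (hb.and_eventually (Filter.eventually_ge_atTop T')).exists
    have : θ t ∈ V := hV ⟨t, htb, rfl⟩
    apply this
    simp only [Metric.mem_closedBall, dist_zero_right]
    exact le_trans (le_of_lt ht) (le_max_left _ _)
end

section
/- Let g : ℝ^k → ℝ be continuously differentiable with a unique critical point θ* (i.e. θ* is the unique point with ∇g(θ*) = 0). Suppose there exists R₀ > 0 such that for every i = 1, …, k and every θ ∈ ℝ^k: ∂g/∂θ_i(θ) > 0 whenever θ_i − θ*_i > R₀, and ∂g/∂θ_i(θ) < 0 whenever θ_i − θ*_i < −R₀. Let C_α > 0, α_s = C_α/s, and let θ : [1, ∞) → ℝ^k be continuous with ‖∇g(θ(t))‖ → 0 as t → ∞ and satisfying the integral representation θ(t) = θ(1) − ∫_1^t α_s ∇g(θ(s)) ds + R(t) for all t ≥ 1, where R : [1, ∞) → ℝ^k is a function that converges to a finite limit as t → ∞. Then θ(t) → θ* as t →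 ∞. -/
open Filter Set MeasureTheory

lemma stmt11_aux (F h : ℝ → ℝ) (T M : ℝ)
    (hFc : ∀ b, T ≤ b → ContinuousOn F (Set.Icc T b))
    (hdiff : ∀ c t, T ≤ c → c ≤ t → F t - F c = -∫ s in c..t, h s)
    (hFT : F T ≤ M)
    (hpos : ∀ s, T < s → M < F s → 0 ≤ h s) :
    ∀ t, T ≤ t → F t ≤ M := by
  intro t ht
  by_contra hMt
  push_neg at hMt
  have hSclosed : IsClosed (Set.Icc T t ∩ F ⁻¹' Set.Iic M) :=
    (hFc t ht).preimage_isClosed_of_isClosed isClosed_Icc isClosed_Iic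
  have hTS : T ∈ Set.Icc T t ∩ F ⁻¹' Set.Iic M := ⟨⟨le_refl _, ht⟩, hFT⟩
  have hbdd : BddAbove (Set.Icc T t ∩ F ⁻¹' Set.Iic M) := ⟨t, fun s hs => hs.1.2⟩
  set c := sSup (Set.Icc T t ∩ F ⁻¹' Set.Iic M) with hc
  have hcS : c ∈ Set.Icc T t ∩ F ⁻¹' Set.Iic M := hSclosed.csSup_mem ⟨T, hTS⟩ hbdd
  have hFcM : F c ≤ M := hcS.2
  have hTc : T ≤ c := hcS.1.1
  have hct : c < t := by
    rcases lt_or_eq_of_le hcS.1.2 with h' | h'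
    · exact h'
    · rw [h'] at hFcM; linarith
  have key : ∀ s ∈ Set.Ioc c t, 0 ≤ h s := by
    intro s hs
    have hsT : T < s := lt_of_le_of_lt hTc hs.1
    refine hpos s hsT ?_
    by_contra hFs
    push_neg at hFs
    have hsS : s ∈ Set.Icc T t ∩ F ⁻¹' Set.Iic M := ⟨⟨le_of_lt hsT, hs.2⟩, hFs⟩
    exact absurd (le_csSup hbdd hsS) (not_le.mpr hs.1)
  have hint : 0 ≤ ∫ s in c..t, h s := by
    rw [intervalIntegral.integral_of_le (le_of_lt hct)]
    exact MeasureTheory.setIntegral_nonneg measurableSet_Ioc key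
  have := hdiff c t hTc (le_of_lt hct)
  linarith


/-- Pathwise convergence to the unique critical point in the non-convex case:
under the inward-pointing gradient condition outside a box of radius `R₀`, a continuous path
with `‖∇g(θ(t))‖ → 0` satisfying the integral representation
`θ(t) = θ(1) − ∫_1^t α_s ∇g(θ(s)) ds + R(t)` (with `α_s = C_α/s` and `R` convergent)
converges to `θ*`. -/
theorem stmt11 (k : ℕ) (hk : 1 ≤ k)
    (g : EuclideanSpace ℝ (Fin k) → ℝ) (hg : ContDiff ℝ 1 g)
    (θstar : EuclideanSpace ℝ (Fin k))
    (hunique : ∀ θv : EuclideanSpace ℝ (Fin k), gradient g θv = 0 ↔ θv = θstar)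
    (R₀ : ℝ) (hR₀ : 0 < R₀)
    (hin : ∀ (i : Fin k) (θv : EuclideanSpace ℝ (Fin k)),
      (R₀ < θv i - θstar i → 0 < gradient g θv i) ∧
      (θv i - θstar i < -R₀ → gradient g θv i < 0))
    (Cα : ℝ) (hCα : 0 < Cα)
    (θ : ℝ → EuclideanSpace ℝ (Fin k)) (hθ : ContinuousOn θ (Set.Ici 1))
    (hgrad : Filter.Tendsto (fun t => ‖gradient g (θ t)‖) Filter.atTop (nhds 0))
    (R : ℝ → EuclideanSpace ℝ (Fin k))
    (hR : ∃ L, Filter.Tendsto R Filter.atTop (nhds L))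
    (hrep : ∀ t ≥ (1 : ℝ),
      θ t = θ 1 - (∫ s in (1 : ℝ)..t, (Cα / s) • gradient g (θ s)) + R t) :
    Filter.Tendsto θ Filter.atTop (nhds θstar) := by
  obtain ⟨L, hL⟩ := hR
  -- continuity of the gradient
  have hgc : Continuous (gradient g) := by
    have h1 : Continuous (fderiv ℝ g) := hg.continuous_fderiv one_ne_zero
    exact (InnerProductSpace.toDual ℝ
      (EuclideanSpace ℝ (Fin k))).symm.continuous.comp h1
  -- coordinate bound
  have habs : ∀ (x : EuclideanSpace ℝ (Fin k)) (i : Fin k), |x i| ≤ ‖x‖ := by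
    intro x i
    rw [EuclideanSpace.norm_eq]
    have h1 : |x i| = Real.sqrt (‖x i‖ ^ 2) := by
      rw [Real.sqrt_sq_eq_abs, Real.norm_eq_abs, abs_abs]
    rw [h1]
    apply Real.sqrt_le_sqrt
    exact Finset.single_le_sum (fun j _ => sq_nonneg ‖x j‖) (Finset.mem_univ i)
  -- continuity of vector integrand
  have hGcont : ContinuousOn (fun s : ℝ => (Cα / s) • gradient g (θ s)) (Set.Ici 1) := by
    refine ContinuousOn.smul (f := fun s : ℝ => Cα / s) ?_ (hgc.comp_continuousOn hθ)
    exact continuousOn_const.div continuousOn_id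
      (fun s hs => by have : (1:ℝ) ≤ s := hs; positivity)
  have hGint : ∀ t, 1 ≤ t →
      IntervalIntegrable (fun s : ℝ => (Cα / s) • gradient g (θ s)) volume 1 t := by
    intro t ht
    apply ContinuousOn.intervalIntegrable
    rw [Set.uIcc_of_le ht]
    exact hGcont.mono Set.Icc_subset_Ici_self
  -- coordinate integrand
  set hco : Fin k → ℝ → ℝ := fun i s => (Cα / s) * gradient g (θ s) i with hhco
  have hcocont : ∀ i, ContinuousOn (hco i) (Set.Ici 1) := by
    intro i
    refine ContinuousOn.mul ?_ (((EuclideanSpace.proj i).continuous.comp hgc).comp_continuousOn hθ)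
    exact continuousOn_const.div continuousOn_id
      (fun s hs => by have : (1:ℝ) ≤ s := hs; positivity)
  have hcoint : ∀ i a b, 1 ≤ a → a ≤ b → IntervalIntegrable (hco i) volume a b := by
    intro i a b ha hab
    apply ContinuousOn.intervalIntegrable
    rw [Set.uIcc_of_le hab]
    exact (hcocont i).mono (Set.Icc_subset_Ici_self.trans (Set.Ici_subset_Ici.mpr ha))
  -- primitive functions
  set Fi : Fin k → ℝ → ℝ := fun i t => θ 1 i - ∫ s in (1:ℝ)..t, hco i s with hFi
  have hrepi : ∀ i, ∀ t, 1 ≤ t → θ t i = Fi i t + R t i := by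
    intro i t ht
    have h1 := hrep t ht
    have h2 : (∫ s in (1:ℝ)..t, (Cα / s) • gradient g (θ s)) i
        = ∫ s in (1:ℝ)..t, hco i s := by
      have h3 := (EuclideanSpace.proj (𝕜 := ℝ) i).intervalIntegral_comp_comm (hGint t ht)
      simpa [hhco, EuclideanSpace.proj, smul_eq_mul] using h3.symm
    have h4 := congrArg (fun x : EuclideanSpace ℝ (Fin k) => x i) h1
    simp only [PiLp.add_apply, PiLp.sub_apply] at h4
    rw [h4, h2, hFi]
  have hFicont : ∀ i b, 1 ≤ b → ContinuousOn (Fi i) (Set.Icc 1 b) := by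
    intro i b hb
    apply ContinuousOn.sub continuousOn_const
    have := intervalIntegral.continuousOn_primitive_interval'
      (hcoint i 1 b le_rfl hb) (Set.left_mem_uIcc (a := (1:ℝ)) (b := b))
    rwa [Set.uIcc_of_le hb] at this
  have hFidiff : ∀ i c t, 1 ≤ c → c ≤ t →
      Fi i t - Fi i c = -∫ s in c..t, hco i s := by
    intro i c t hc hct
    have := intervalIntegral.integral_add_adjacent_intervals
      (hcoint i 1 c le_rfl hc) (hcoint i c t (le_trans le_rfl hc) hct)
    simp only [hFi]
    linarith [this]
  -- choose T and bound on R coordinates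
  obtain ⟨N, hN⟩ := Metric.tendsto_atTop.mp hL 1 one_pos
  set T : ℝ := max N 1 with hT
  have hT1 : (1:ℝ) ≤ T := le_max_right _ _
  set B : ℝ := ‖L‖ + 1 with hB
  have hRB : ∀ t, T ≤ t → ∀ i, |R t i| ≤ B := by
    intro t ht i
    have h1 : dist (R t) L < 1 := hN t (le_trans (le_max_left _ _) ht)
    have h2 : |R t i - L i| ≤ ‖R t - L‖ := by
      have := habs (R t - L) i
      simpa [PiLp.sub_apply] using this
    have h3 : ‖R t - L‖ < 1 := by rwa [dist_eq_norm] at h1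
    have h4 : |L i| ≤ ‖L‖ := habs L i
    calc |R t i| ≤ |R t i - L i| + |L i| := by
          have := abs_sub_abs_le_abs_sub (R t i) (L i); have := abs_add_le (R t i - L i) (L i)
          calc |R t i| = |(R t i - L i) + L i| := by ring_nf
            _ ≤ |R t i - L i| + |L i| := abs_add_le _ _
      _ ≤ B := by rw [hB]; linarith
  -- coordinate bounds
  have hbd : ∀ i, ∃ C, ∀ t, T ≤ t → |θ t i| ≤ C := by
    intro i
    set Mup : ℝ := max (Fi i T) (θstar i + R₀ + B) with hMup
    have hup : ∀ t, T ≤ t → Fi i t ≤ Mup := by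
      apply stmt11_aux (Fi i) (hco i) T Mup
      · intro b hb
        exact (hFicont i b (le_trans hT1 hb)).mono
          (Set.Icc_subset_Icc_left hT1)
      · intro c t hc hct
        exact hFidiff i c t (le_trans hT1 hc) hct
      · exact le_max_left _ _
      · intro s hs hFs
        have hs1 : (1:ℝ) ≤ s := le_trans hT1 (le_of_lt hs)
        have hθs : θ s i = Fi i s + R s i := hrepi i s hs1
        have hRs : |R s i| ≤ B := hRB s (le_of_lt hs) i
        have hgt : R₀ < θ s i - θstar i := by
          have : θstar i + R₀ + B ≤ Mup := le_max_right _ _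
          have habs' := abs_le.mp hRs
          rw [hθs]; linarith
        have hgpos := (hin i (θ s)).1 hgt
        have hspos : (0:ℝ) < s := lt_of_lt_of_le one_pos hs1
        exact le_of_lt (mul_pos (div_pos hCα hspos) hgpos)
    set Mlo : ℝ := max (-(Fi i T)) (B + R₀ - θstar i) with hMlo
    have hlo : ∀ t, T ≤ t → -(Fi i t) ≤ Mlo := by
      apply stmt11_aux (fun t => -(Fi i t)) (fun s => -(hco i s)) T Mlo
      · intro b hb
        exact ((hFicont i b (le_trans hT1 hb)).mono
          (Set.Icc_subset_Icc_left hT1)).neg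
      · intro c t hc hct
        have h1 := hFidiff i c t (le_trans hT1 hc) hct
        rw [intervalIntegral.integral_neg]
        linarith
      · exact le_max_left _ _
      · intro s hs hFs
        have hs1 : (1:ℝ) ≤ s := le_trans hT1 (le_of_lt hs)
        have hθs : θ s i = Fi i s + R s i := hrepi i s hs1
        have hRs : |R s i| ≤ B := hRB s (le_of_lt hs) i
        have hlt : θ s i - θstar i < -R₀ := by
          have : B + R₀ - θstar i ≤ Mlo := le_max_right _ _
          have habs' := abs_le.mp hRs
          rw [hθs]; linarith
        have hgneg := (hin i (θ s)).2 hlt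
        have hspos : (0:ℝ) < s := lt_of_lt_of_le one_pos hs1
        have : (Cα / s) * gradient g (θ s) i < 0 :=
          mul_neg_of_pos_of_neg (div_pos hCα hspos) hgneg
        simp only [hhco]
        linarith
    refine ⟨max Mup Mlo + B, fun t ht => ?_⟩
    have h1 := hup t ht
    have h2 := hlo t ht
    have hθt : θ t i = Fi i t + R t i := hrepi i t (le_trans hT1 ht)
    have hRt := abs_le.mp (hRB t ht i)
    have hm1 : Mup ≤ max Mup Mlo := le_max_left _ _
    have hm2 : Mlo ≤ max Mup Mlo := le_max_right _ _
    rw [abs_le, hθt]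
    constructor <;> linarith [hRt.1, hRt.2]
  choose C hC using hbd
  set Cn : ℝ := Real.sqrt (∑ i, C i ^ 2) with hCn
  have hnorm : ∀ t, T ≤ t → ‖θ t‖ ≤ Cn := by
    intro t ht
    rw [EuclideanSpace.norm_eq]
    apply Real.sqrt_le_sqrt
    apply Finset.sum_le_sum
    intro i _
    rw [Real.norm_eq_abs]
    have h1 := hC i t ht
    have h2 : (0:ℝ) ≤ |θ t i| := abs_nonneg _
    calc |θ t i| ^ 2 ≤ (C i) ^ 2 := by nlinarith
      _ = C i ^ 2 := rfl
  -- final compactness argument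
  by_contra hcon
  rw [Metric.tendsto_atTop] at hcon
  push_neg at hcon
  obtain ⟨ε, hε, hfreq⟩ := hcon
  have hsel : ∀ n : ℕ, ∃ t, t ≥ max (n : ℝ) T ∧ ε ≤ dist (θ t) θstar := fun n =>
    hfreq (max (n : ℝ) T)
  choose u hu hud using hsel
  have huT : ∀ n, T ≤ u n := fun n => le_trans (le_max_right _ _) (hu n)
  have hmem : ∀ n, θ (u n) ∈ Metric.closedBall (0 : EuclideanSpace ℝ (Fin k)) Cn := by
    intro n
    simpa [Metric.mem_closedBall, dist_zero_right] using hnorm (u n) (huT n)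
  obtain ⟨a, -, φ, hφ, hconv⟩ :=
    (isCompact_closedBall (0 : EuclideanSpace ℝ (Fin k)) Cn).tendsto_subseq hmem
  have hutop : Filter.Tendsto (fun n => u (φ n)) Filter.atTop Filter.atTop := by
    apply Filter.tendsto_atTop_mono (fun n => ?_) tendsto_natCast_atTop_atTop
    calc ((n:ℕ) : ℝ) ≤ (φ n : ℝ) := by exact_mod_cast Nat.cast_le.mpr (hφ.le_apply)
      _ ≤ max (φ n : ℝ) T := le_max_left _ _
      _ ≤ u (φ n) := hu (φ n)
  have h1 : Filter.Tendsto (fun n => ‖gradient g (θ (u (φ n)))‖) Filter.atTop (nhds 0) :=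
    hgrad.comp hutop
  have h2 : Filter.Tendsto (fun n => ‖gradient g (θ (u (φ n)))‖) Filter.atTop
      (nhds ‖gradient g a‖) :=
    ((continuous_norm.comp hgc).tendsto a).comp hconv
  have h3 : ‖gradient g a‖ = 0 := tendsto_nhds_unique h2 h1
  have ha : a = θstar := (hunique a).mp (norm_eq_zero.mp h3)
  have h4 : Filter.Tendsto (fun n => dist (θ (u (φ n))) θstar) Filter.atTop (nhds 0) := by
    have := hconv.dist (tendsto_const_nhds (x := θstar) (f := Filter.atTop))
    rw [ha] at this
    simpa using this
  have h5 : ε ≤ 0 := ge_of_tendsto h4 (Filter.Eventually.of_forall fun n => hud (φ n))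
  linarith
end

section
/- Let k ≥ 1, C > 0, C_α > 0, δ ≥ 0, and set α_t = C_α/t. Let A be a symmetric real k×k matrix with zᵀ A z ≥ C‖z‖² for all z ∈ ℝ^k, and let Â : [1, ∞) → ℝ^{k×k} be continuous with zᵀ Â(u) z ≥ C‖z‖² for all z and all u ≥ 1, and ‖Â(u) − A‖ ≤ δ for all u ≥ 1. Fix s ≥ 1 and let Φ : [s, ∞) → ℝ^{k×k} be differentiable with Φ(s) = I and Φ′(t) = −α_t Â(t) Φ(t) for t ≥ s; set Φ*_{t,s} = exp(−C_α log(t/s) A). Then there exists a constant K < ∞ depending only on k and C_α (not on δ, s, t, Â) such that for all t ≥ s, ‖Φ(t) − Φ*_{t,s}‖ ≤ K δ (1 + log(t/s)) (s/t)^{C C_α}. -/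
attribute [local instance] Matrix.frobeniusNormedAddCommGroup Matrix.frobeniusNormedSpace

open NormedSpace

namespace Stmt12Aux

attribute [local instance] Matrix.frobeniusNormedRing Matrix.frobeniusNormedAlgebra

variable {k : ℕ}

lemma frobenius_norm_sq (M : Matrix (Fin k) (Fin k) ℝ) :
    ‖M‖ ^ 2 = ∑ i, ∑ j, (M i j) ^ 2 := by
  rw [Matrix.frobenius_norm_def]
  have h : ∀ i j, ‖M i j‖ ^ (2:ℝ) = (M i j)^2 := fun i j => by
    rw [show (2:ℝ) = ((2:ℕ):ℝ) by norm_num, Real.rpow_natCast]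
    simp [Real.norm_eq_abs, sq_abs]
  simp_rw [h]
  rw [← Real.rpow_natCast _ 2, ← Real.rpow_mul (by positivity)]
  norm_num

lemma abs_entry_le (M : Matrix (Fin k) (Fin k) ℝ) (i j : Fin k) : |M i j| ≤ ‖M‖ := by
  have h1 : (M i j)^2 ≤ ‖M‖^2 := by
    rw [frobenius_norm_sq]
    calc (M i j)^2 ≤ ∑ b, (M i b)^2 :=
          Finset.single_le_sum (f := fun b => (M i b)^2) (fun b _ => sq_nonneg _)
            (Finset.mem_univ j)
    _ ≤ ∑ a, ∑ b, (M a b)^2 :=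
          Finset.single_le_sum (f := fun a => ∑ b, (M a b)^2)
            (fun a _ => Finset.sum_nonneg fun b _ => sq_nonneg _) (Finset.mem_univ i)
  have h2 : |M i j|^2 ≤ ‖M‖^2 := by rwa [sq_abs]
  exact abs_le_of_sq_le_sq h1 (norm_nonneg _)

noncomputable def entryCLM (i j : Fin k) : Matrix (Fin k) (Fin k) ℝ →L[ℝ] ℝ :=
  LinearMap.mkContinuous
    { toFun := fun M => M i j
      map_add' := fun M N => rfl
      map_smul' := fun c M => rfl } 1
    (fun M => (abs_entry_le M i j).trans_eq (one_mul _).symm)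

lemma entryCLM_apply (i j : Fin k) (M : Matrix (Fin k) (Fin k) ℝ) : entryCLM i j M = M i j := rfl

lemma hasDerivWithinAt_entry {Φ : ℝ → Matrix (Fin k) (Fin k) ℝ} {Φ' : Matrix (Fin k) (Fin k) ℝ}
    {s : Set ℝ} {t : ℝ} (h : HasDerivWithinAt Φ Φ' s t) (i j : Fin k) :
    HasDerivWithinAt (fun u => Φ u i j) (Φ' i j) s t :=
  (entryCLM i j).hasFDerivAt.comp_hasDerivWithinAt t h

lemma hasDerivAt_entry {Φ : ℝ → Matrix (Fin k) (Fin k) ℝ} {Φ' : Matrix (Fin k) (Fin k) ℝ}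
    {t : ℝ} (h : HasDerivAt Φ Φ' t) (i j : Fin k) :
    HasDerivAt (fun u => Φ u i j) (Φ' i j) t :=
  (entryCLM i j).hasFDerivAt.comp_hasDerivAt t h

lemma hasDerivAt_sumsq {Φ : ℝ → Matrix (Fin k) (Fin k) ℝ} {Φ' : Matrix (Fin k) (Fin k) ℝ}
    {t : ℝ} (h : HasDerivAt Φ Φ' t) :
    HasDerivAt (fun u => ∑ i, ∑ j, (Φ u i j)^2)
      (∑ i, ∑ j, 2 * (Φ t i j * Φ' i j)) t := by
  apply HasDerivAt.fun_sum
  intro i _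
  apply HasDerivAt.fun_sum
  intro j _
  have h2 : HasDerivAt (fun y => Φ y i j * Φ y i j) (Φ' i j * Φ t i j + Φ t i j * Φ' i j) t :=
    (hasDerivAt_entry h i j).mul (hasDerivAt_entry h i j)
  have he : (fun y => Φ y i j ^ 2) = fun y => Φ y i j * Φ y i j := by ext y; ring
  rw [he]
  exact h2.congr_deriv (by ring)

lemma quad_col {C : ℝ} {M : Matrix (Fin k) (Fin k) ℝ}
    (hM : ∀ z : EuclideanSpace ℝ (Fin k), C * ‖z‖ ^ 2 ≤ ∑ i, ∑ j, z i * M i j * z j)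
    (W : Matrix (Fin k) (Fin k) ℝ) :
    C * (∑ i, ∑ j, (W i j)^2) ≤ ∑ i, ∑ j, W i j * (M * W) i j := by
  have key : ∀ j : Fin k, C * (∑ i, (W i j)^2) ≤ ∑ i, W i j * (M * W) i j := by
    intro j
    set z : EuclideanSpace ℝ (Fin k) := (WithLp.equiv 2 _).symm (fun i => W i j) with hz
    have hznorm : ‖z‖^2 = ∑ i, (W i j)^2 := by
      rw [EuclideanSpace.norm_eq, Real.sq_sqrt (Finset.sum_nonneg fun i _ => by positivity)]
      simp [hz, WithLp.equiv_symm_apply, WithLp.ofLp_toLp, Real.norm_eq_abs, sq_abs]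
    have := hM z
    rw [hznorm] at this
    refine this.trans (le_of_eq ?_)
    simp only [hz, WithLp.equiv_symm_apply, WithLp.ofLp_toLp, Matrix.mul_apply, Finset.mul_sum]
    apply Finset.sum_congr rfl
    intro i _
    apply Finset.sum_congr rfl
    intro l _
    ring
  calc C * (∑ i, ∑ j, (W i j)^2) = ∑ j, C * ∑ i, (W i j)^2 := by
        rw [Finset.sum_comm, Finset.mul_sum]
  _ ≤ ∑ j, ∑ i, W i j * (M * W) i j := Finset.sum_le_sum fun j _ => key j
  _ = ∑ i, ∑ j, W i j * (M * W) i j := by rw [Finset.sum_comm]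

lemma sqrt_exp_sq (a : ℝ) : Real.sqrt (Real.exp (2 * a)) = Real.exp a := by
  rw [show 2 * a = a + a by ring, Real.exp_add, Real.sqrt_mul_self (Real.exp_pos a).le]

lemma exp_mul_norm_le {C : ℝ} {A : Matrix (Fin k) (Fin k) ℝ}
    (hA : ∀ z : EuclideanSpace ℝ (Fin k), C * ‖z‖ ^ 2 ≤ ∑ i, ∑ j, z i * A i j * z j)
    (N : Matrix (Fin k) (Fin k) ℝ) {μ : ℝ} (hμ : 0 ≤ μ) :
    ‖exp ((-μ) • A) * N‖ ≤ Real.exp (-(C * μ)) * ‖N‖ := by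
  set W : ℝ → Matrix (Fin k) (Fin k) ℝ := fun ν => exp (ν • (-A)) * N with hWdef
  have hW : ∀ ν, HasDerivAt W (-(A * W ν)) ν := by
    intro ν
    have h0 : HasDerivAt (fun y => exp (y • -A) * N) (-A * exp (ν • -A) * N) ν :=
      (hasDerivAt_exp_smul_const' (𝕂 := ℝ) (-A) ν).mul_const N
    convert h0 using 1
    show -(A * (exp (ν • -A) * N)) = -A * exp (ν • -A) * N
    rw [neg_mul, neg_mul, mul_assoc]
  set F : ℝ → ℝ := fun ν => ∑ i, ∑ j, (W ν i j)^2 with hFdef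
  have hF : ∀ ν, HasDerivAt F (∑ i, ∑ j, 2 * (W ν i j * (-(A * W ν)) i j)) ν :=
    fun ν => hasDerivAt_sumsq (hW ν)
  set G : ℝ → ℝ := fun ν => Real.exp (2*C*ν) * F ν with hGdef
  have hE : ∀ ν : ℝ, HasDerivAt (fun x => Real.exp (2*C*x)) (2*C*Real.exp (2*C*ν)) ν := by
    intro ν
    have := ((hasDerivAt_id ν).const_mul (2*C)).exp
    simpa [mul_comm, mul_assoc, mul_left_comm] using this
  have hG : ∀ ν, HasDerivAt G
      (2*C*Real.exp (2*C*ν) * F ν +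
        Real.exp (2*C*ν) * (∑ i, ∑ j, 2 * (W ν i j * (-(A * W ν)) i j))) ν :=
    fun ν => (hE ν).mul (hF ν)
  have hG' : ∀ ν, (2*C*Real.exp (2*C*ν) * F ν +
        Real.exp (2*C*ν) * (∑ i, ∑ j, 2 * (W ν i j * (-(A * W ν)) i j))) ≤ 0 := by
    intro ν
    have hq := quad_col hA (W ν)
    have hsum : (∑ i, ∑ j, 2 * (W ν i j * (-(A * W ν)) i j))
        = -2 * ∑ i, ∑ j, W ν i j * (A * W ν) i j := by
      rw [Finset.mul_sum]
      apply Finset.sum_congr rfl; intro i _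
      rw [Finset.mul_sum]
      apply Finset.sum_congr rfl; intro j _
      rw [Matrix.neg_apply]; ring
    rw [hsum]
    have h1 : 2*C*Real.exp (2*C*ν) * F ν = Real.exp (2*C*ν) * (2 * (C * F ν)) := by ring
    rw [h1]
    have h2 : Real.exp (2*C*ν) * (-2 * ∑ i, ∑ j, W ν i j * (A * W ν) i j)
        ≤ Real.exp (2*C*ν) * (-2 * (C * F ν)) := by
      apply mul_le_mul_of_nonneg_left _ (Real.exp_pos _).le
      have := hq
      nlinarith
    nlinarith [h2]
  have hanti : AntitoneOn G (Set.Ici (0:ℝ)) := by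
    apply antitoneOn_of_deriv_nonpos (convex_Ici 0)
    · exact (fun ν _ => ((hG ν).continuousAt.continuousWithinAt))
    · exact fun ν _ => ((hG ν).differentiableAt.differentiableWithinAt)
    · intro ν _
      rw [(hG ν).deriv]
      exact hG' ν
  have hle : G μ ≤ G 0 := hanti (Set.self_mem_Ici) hμ hμ
  have hW0 : W 0 = N := by simp [hWdef]
  have hG0 : G 0 = ‖N‖^2 := by
    simp only [hGdef, hFdef, hW0]
    rw [frobenius_norm_sq]
    simp
  have hFμ : F μ = ‖W μ‖^2 := (frobenius_norm_sq (W μ)).symm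
  have hGμ : G μ = Real.exp (2*C*μ) * ‖W μ‖^2 := by
    rw [show G μ = Real.exp (2*C*μ) * F μ from rfl, hFμ]
  have hall : Real.exp (2*C*μ) * ‖W μ‖^2 ≤ ‖N‖^2 := by
    rw [← hGμ, ← hG0]; exact hle
  have h3 : ‖W μ‖^2 ≤ Real.exp (-(2*C*μ)) * ‖N‖^2 := by
    rw [Real.exp_neg, inv_mul_eq_div, le_div_iff₀ (Real.exp_pos _), mul_comm]
    exact hall
  have h4 : ‖W μ‖ ≤ Real.exp (-(C*μ)) * ‖N‖ := by
    have h5 := Real.sqrt_le_sqrt h3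
    rw [Real.sqrt_sq (norm_nonneg _), Real.sqrt_mul (Real.exp_pos _).le,
      Real.sqrt_sq (norm_nonneg _), show -(2*C*μ) = 2*(-(C*μ)) by ring, sqrt_exp_sq] at h5
    exact h5
  rw [show (-μ) • A = μ • (-A) by rw [neg_smul, smul_neg]]
  exact h4

lemma phi_decay {C Cα : ℝ} (hC : 0 < C) (hCα : 0 < Cα)
    {Ahat : ℝ → Matrix (Fin k) (Fin k) ℝ} {s : ℝ} (hs : 1 ≤ s)
    (hAq : ∀ u ∈ Set.Ici s, ∀ z : EuclideanSpace ℝ (Fin k),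
      C * ‖z‖ ^ 2 ≤ ∑ i, ∑ j, z i * Ahat u i j * z j)
    {Φ : ℝ → Matrix (Fin k) (Fin k) ℝ} (hΦs : Φ s = 1)
    (hΦ : ∀ u ∈ Set.Ici s, HasDerivWithinAt Φ (-((Cα / u) • (Ahat u * Φ u))) (Set.Ici s) u)
    {t : ℝ} (ht : t ∈ Set.Ici s) :
    ‖Φ t‖ ≤ Real.sqrt k * Real.exp (-(C * Cα * Real.log (t/s))) := by
  have hspos : (0:ℝ) < s := lt_of_lt_of_le one_pos hs
  have htpos : (0:ℝ) < t := lt_of_lt_of_le hspos ht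
  set F : ℝ → ℝ := fun u => ∑ i, ∑ j, (Φ u i j)^2 with hFdef
  set G : ℝ → ℝ := fun u => Real.exp (2*C*Cα*Real.log u) * F u with hGdef
  have hΦcont : ContinuousOn Φ (Set.Ici s) := fun u hu => (hΦ u hu).continuousWithinAt
  have hFcont : ContinuousOn F (Set.Ici s) := by
    apply continuousOn_finset_sum
    intro i _
    apply continuousOn_finset_sum
    intro j _
    exact (((entryCLM i j).continuous.comp_continuousOn hΦcont)).pow 2
  have hGcont : ContinuousOn G (Set.Ici s) := by
    apply ContinuousOn.mul _ hFcont
    apply Real.continuous_exp.comp_continuousOn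
    apply ContinuousOn.mul continuousOn_const
    apply Real.continuousOn_log.mono
    intro u hu
    simp only [Set.mem_compl_iff, Set.mem_singleton_iff]
    exact ne_of_gt (lt_of_lt_of_le hspos hu)
  have hderiv : ∀ u ∈ Set.Ioi s,
      HasDerivAt G (Real.exp (2*C*Cα*Real.log u) * (2*C*Cα * u⁻¹) * F u +
        Real.exp (2*C*Cα*Real.log u) *
          (∑ i, ∑ j, 2 * (Φ u i j * (-((Cα / u) • (Ahat u * Φ u))) i j))) u := by
    intro u hu
    have hupos : (0:ℝ) < u := lt_of_lt_of_le hspos (le_of_lt hu)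
    have hΦu : HasDerivAt Φ (-((Cα / u) • (Ahat u * Φ u))) u :=
      (hΦ u (Set.Ioi_subset_Ici_self hu)).hasDerivAt (Ici_mem_nhds hu)
    have hFu := hasDerivAt_sumsq hΦu
    have hEu : HasDerivAt (fun x => Real.exp (2*C*Cα*Real.log x))
        (Real.exp (2*C*Cα*Real.log u) * (2*C*Cα * u⁻¹)) u :=
      ((Real.hasDerivAt_log (ne_of_gt hupos)).const_mul (2*C*Cα)).exp
    exact hEu.mul hFu
  have hderiv_nonpos : ∀ u ∈ Set.Ioi s,
      (Real.exp (2*C*Cα*Real.log u) * (2*C*Cα * u⁻¹) * F u +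
        Real.exp (2*C*Cα*Real.log u) *
          (∑ i, ∑ j, 2 * (Φ u i j * (-((Cα / u) • (Ahat u * Φ u))) i j))) ≤ 0 := by
    intro u hu
    have hupos : (0:ℝ) < u := lt_of_lt_of_le hspos (le_of_lt hu)
    have hq := quad_col (hAq u (Set.Ioi_subset_Ici_self hu)) (Φ u)
    have hsum : (∑ i, ∑ j, 2 * (Φ u i j * (-((Cα / u) • (Ahat u * Φ u))) i j))
        = -(2 * (Cα/u)) * ∑ i, ∑ j, Φ u i j * (Ahat u * Φ u) i j := by
      rw [Finset.mul_sum]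
      apply Finset.sum_congr rfl; intro i _
      rw [Finset.mul_sum]
      apply Finset.sum_congr rfl; intro j _
      rw [Matrix.neg_apply, Matrix.smul_apply]
      simp only [smul_eq_mul]
      ring
    rw [hsum]
    have hF_nonneg : 0 ≤ F u :=
      Finset.sum_nonneg fun i _ => Finset.sum_nonneg fun j _ => sq_nonneg _
    have hcu : 0 < Cα / u := div_pos hCα hupos
    have hEpos := Real.exp_pos (2*C*Cα*Real.log u)
    have hkey : 2*C*Cα * u⁻¹ * F u +
        -(2 * (Cα/u)) * ∑ i, ∑ j, Φ u i j * (Ahat u * Φ u) i j ≤ 0 := by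
      have h1 : 2*C*Cα * u⁻¹ * F u = 2 * (Cα/u) * (C * F u) := by
        field_simp
      rw [h1]
      nlinarith [mul_le_mul_of_nonneg_left hq (le_of_lt (by positivity : (0:ℝ) < 2 * (Cα/u)))]
    nlinarith [hkey, hEpos]
  have hanti : AntitoneOn G (Set.Ici s) := by
    apply antitoneOn_of_deriv_nonpos (convex_Ici s) hGcont
    · intro u hu
      rw [interior_Ici] at hu
      exact ((hderiv u hu).differentiableAt.differentiableWithinAt)
    · intro u hu
      rw [interior_Ici] at hu
      rw [(hderiv u hu).deriv]
      exact hderiv_nonpos u hu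
  have hle : G t ≤ G s := hanti Set.self_mem_Ici ht ht
  have hFs : F s = k := by
    simp only [hFdef, hΦs]
    have : ∀ i j : Fin k, ((1 : Matrix (Fin k) (Fin k) ℝ) i j)^2
        = if i = j then (1:ℝ) else 0 := by
      intro i j
      by_cases h : i = j <;> simp [Matrix.one_apply, h]
    simp_rw [this]
    simp
  have hFt : F t = ‖Φ t‖^2 := (frobenius_norm_sq (Φ t)).symm
  have hGt : G t = Real.exp (2*C*Cα*Real.log t) * ‖Φ t‖^2 := by
    rw [show G t = Real.exp (2*C*Cα*Real.log t) * F t from rfl, hFt]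
  have hGs : G s = Real.exp (2*C*Cα*Real.log s) * k := by
    rw [show G s = Real.exp (2*C*Cα*Real.log s) * F s from rfl, hFs]
  have h3 : ‖Φ t‖^2 ≤ Real.exp (-(2*C*Cα*Real.log (t/s))) * k := by
    have h2 : Real.exp (2*C*Cα*Real.log t) * ‖Φ t‖^2
        ≤ Real.exp (2*C*Cα*Real.log s) * k := by rw [← hGt, ← hGs]; exact hle
    rw [Real.log_div (ne_of_gt htpos) (ne_of_gt hspos)]
    rw [show -(2*C*Cα*(Real.log t - Real.log s))
        = 2*C*Cα*Real.log s - 2*C*Cα*Real.log t by ring, Real.exp_sub]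
    rw [div_mul_eq_mul_div, le_div_iff₀ (Real.exp_pos _), mul_comm (‖Φ t‖^2) _]
    calc Real.exp (2*C*Cα*Real.log t) * ‖Φ t‖^2 ≤ Real.exp (2*C*Cα*Real.log s) * k := h2
    _ = Real.exp (2*C*Cα*Real.log s) * ↑k := rfl
  have hk0 : (0:ℝ) ≤ k := Nat.cast_nonneg k
  have h5 := Real.sqrt_le_sqrt h3
  rw [Real.sqrt_sq (norm_nonneg _), Real.sqrt_mul (Real.exp_pos _).le,
    show -(2*C*Cα*Real.log (t/s)) = 2*(-(C*Cα*Real.log (t/s))) by ring, sqrt_exp_sq] at h5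
  calc ‖Φ t‖ ≤ Real.exp (-(C*Cα*Real.log (t/s))) * Real.sqrt k := h5
  _ = Real.sqrt k * Real.exp (-(C * Cα * Real.log (t/s))) := by ring

end Stmt12Aux

open Stmt12Aux

/-- Duhamel-type perturbation estimate: there is a constant `K` depending
only on `k` and `C_α` such that if `Â(u)` is uniformly `C`-positive and `δ`-close to the
`C`-positive symmetric matrix `A`, then the fundamental solution `Φ` of
`Φ′(t) = −(C_α/t) Â(t) Φ(t)`, `Φ(s) = I`, satisfies
`‖Φ(t) − exp(−C_α log(t/s) A)‖ ≤ K δ (1 + log(t/s)) (s/t)^{CC_α}` for all `t ≥ s ≥ 1`. -/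
theorem stmt12 (k : ℕ) (hk : 1 ≤ k) (Cα : ℝ) (hCα : 0 < Cα) :
    ∃ K : ℝ, ∀ (C : ℝ), 0 < C → ∀ (δ : ℝ), 0 ≤ δ →
      ∀ A : Matrix (Fin k) (Fin k) ℝ, A.IsSymm →
      (∀ z : EuclideanSpace ℝ (Fin k), C * ‖z‖ ^ 2 ≤ ∑ i, ∑ j, z i * A i j * z j) →
      ∀ Ahat : ℝ → Matrix (Fin k) (Fin k) ℝ, ContinuousOn Ahat (Set.Ici 1) →
      (∀ u ∈ Set.Ici (1 : ℝ), ∀ z : EuclideanSpace ℝ (Fin k),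
        C * ‖z‖ ^ 2 ≤ ∑ i, ∑ j, z i * Ahat u i j * z j) →
      (∀ u ∈ Set.Ici (1 : ℝ), ‖Ahat u - A‖ ≤ δ) →
      ∀ s : ℝ, 1 ≤ s →
      ∀ Φ : ℝ → Matrix (Fin k) (Fin k) ℝ, Φ s = 1 →
      (∀ t ∈ Set.Ici s, HasDerivWithinAt Φ (-((Cα / t) • (Ahat t * Φ t))) (Set.Ici s) t) →
      ∀ t ∈ Set.Ici s,
        ‖Φ t - exp ((-(Cα * Real.log (t / s))) • A)‖ ≤
          K * δ * (1 + Real.log (t / s)) * (s / t) ^ (C * Cα) := by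
  letI : NormedRing (Matrix (Fin k) (Fin k) ℝ) := Matrix.frobeniusNormedRing
  letI : NormedAlgebra ℝ (Matrix (Fin k) (Fin k) ℝ) := Matrix.frobeniusNormedAlgebra
  letI : NormedAlgebra ℚ (Matrix (Fin k) (Fin k) ℝ) := NormedAlgebra.restrictScalars ℚ ℝ _
  refine ⟨Real.sqrt k * Cα, ?_⟩
  intro C hC δ hδ A hAsymm hAq Ahat hAcont hAhatq hAhatδ s hs Φ hΦs hΦ t ht
  have hspos : (0:ℝ) < s := lt_of_lt_of_le one_pos hs
  have hts : s ≤ t := ht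
  have htpos : (0:ℝ) < t := lt_of_lt_of_le hspos hts
  have hsne : s ≠ 0 := ne_of_gt hspos
  have htne : t ≠ 0 := ne_of_gt htpos
  set L : ℝ → ℝ := fun u => Cα * (Real.log u - Real.log s) with hLdef
  set E : ℝ → Matrix (Fin k) (Fin k) ℝ := fun u => exp ((L u) • A) with hEdef
  have hLderiv : ∀ u : ℝ, 0 < u → HasDerivAt L (Cα * u⁻¹) u := fun u hu =>
    ((Real.hasDerivAt_log (ne_of_gt hu)).sub_const _).const_mul Cα
  have hEderiv : ∀ u : ℝ, 0 < u → HasDerivAt E ((Cα * u⁻¹) • (A * E u)) u := by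
    intro u hu
    have h1 := hasDerivAt_exp_smul_const' (𝕂 := ℝ) A (L u)
    have h2 := HasDerivAt.scomp u h1 (hLderiv u hu)
    exact h2
  have hΦcont : ContinuousOn Φ (Set.Ici s) := fun u hu => (hΦ u hu).continuousWithinAt
  set g : ℝ → Matrix (Fin k) (Fin k) ℝ :=
    fun u => (Cα * u⁻¹) • (E u * ((A - Ahat u) * Φ u)) with hgdef
  have hEA : ∀ u : ℝ, A * E u = E u * A := fun u =>
    (((Commute.refl A).smul_right (L u)).exp_right).eq
  have hP : ∀ u ∈ Set.Ioo s t, HasDerivWithinAt (fun u => E u * Φ u) (g u) (Set.Ioi u) u := by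
    intro u hu
    have hupos : (0:ℝ) < u := lt_of_lt_of_le hspos hu.1.le
    have hΦu : HasDerivAt Φ (-((Cα / u) • (Ahat u * Φ u))) u :=
      (hΦ u hu.1.le).hasDerivAt (Ici_mem_nhds hu.1)
    have hprod := (hEderiv u hupos).mul hΦu
    have heq : ((Cα * u⁻¹) • (A * E u)) * Φ u + E u * (-((Cα / u) • (Ahat u * Φ u))) = g u := by
      rw [hgdef, div_eq_mul_inv, smul_mul_assoc, mul_neg, mul_smul_comm, ← sub_eq_add_neg,
        ← smul_sub]
      congr 1
      rw [hEA u, Matrix.sub_mul, Matrix.mul_sub, mul_assoc]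
    rw [heq] at hprod
    exact hprod.hasDerivWithinAt
  have hsub0 : Set.Icc s t ⊆ {(0:ℝ)}ᶜ := fun u hu => by
    simp only [Set.mem_compl_iff, Set.mem_singleton_iff]
    exact ne_of_gt (lt_of_lt_of_le hspos hu.1)
  have hLcont : ContinuousOn L (Set.Icc s t) :=
    continuousOn_const.mul ((Real.continuousOn_log.mono hsub0).sub continuousOn_const)
  have hEcont : ContinuousOn E (Set.Icc s t) :=
    exp_continuous.comp_continuousOn (hLcont.smul continuousOn_const)
  have hPcont : ContinuousOn (fun u => E u * Φ u) (Set.Icc s t) :=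
    hEcont.mul (hΦcont.mono Set.Icc_subset_Ici_self)
  have h1sub : Set.Icc s t ⊆ Set.Ici (1:ℝ) := fun u hu => le_trans hs hu.1
  have hgcont : ContinuousOn g (Set.Icc s t) := by
    apply ContinuousOn.fun_smul
    · exact continuousOn_const.mul (continuousOn_id.inv₀ fun u hu => hsub0 hu)
    · exact hEcont.mul (((continuousOn_const.sub (hAcont.mono h1sub)).mul
        (hΦcont.mono Set.Icc_subset_Ici_self)))
  have hgint : @IntervalIntegrable _ PseudoMetricSpace.toUniformSpace.toTopologicalSpace _ g
      MeasureTheory.volume s t :=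
    hgcont.intervalIntegrable_of_Icc hts
  have hFTC : (∫ u in s..t, g u) = E t * Φ t - E s * Φ s :=
    intervalIntegral.integral_eq_sub_of_hasDeriv_right_of_le hts hPcont hP hgint
  have hLs : L s = 0 := by simp [hLdef]
  have hEs : E s = 1 := by rw [hEdef]; simp only [hLs, zero_smul, exp_zero]
  have h7 : (∫ u in s..t, g u) = E t * Φ t - 1 := by rw [hFTC, hEs, hΦs, one_mul]
  set Et' : Matrix (Fin k) (Fin k) ℝ := exp ((-(L t)) • A) with hEt'def
  have hinv : Et' * E t = 1 := by
    rw [hEt'def, hEdef]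
    beta_reduce
    rw [← Matrix.exp_add_of_commute _ _ (((Commute.refl A).smul_right (L t)).smul_left (-(L t)))]
    rw [← add_smul, neg_add_cancel, zero_smul, exp_zero]
  have hLt : Cα * Real.log (t / s) = L t := by
    rw [Real.log_div htne hsne]
  have hgoalexp : exp ((-(Cα * Real.log (t / s))) • A) = Et' := by rw [hLt]
  have hdiff : Φ t - exp ((-(Cα * Real.log (t / s))) • A) = Et' * (∫ u in s..t, g u) := by
    rw [hgoalexp, h7, mul_sub, mul_one, ← mul_assoc, hinv, one_mul]
  have hcomm_int : Et' * (∫ u in s..t, g u) = ∫ u in s..t, Et' * g u := by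
    have h9 := ContinuousLinearMap.intervalIntegral_comp_comm
      (ContinuousLinearMap.mul ℝ (Matrix (Fin k) (Fin k) ℝ) Et') hgint
    simpa [ContinuousLinearMap.mul_apply'] using h9.symm
  set B : ℝ := Real.sqrt k * Cα * δ * Real.exp (-(C * (L t))) with hBdef
  have hBnonneg : 0 ≤ B := by
    apply mul_nonneg (mul_nonneg (mul_nonneg (Real.sqrt_nonneg _) hCα.le) hδ) (Real.exp_pos _).le
  have hpt : ∀ u ∈ Set.Ioc s t, ‖Et' * g u‖ ≤ B * (1/u) := by
    intro u hu
    have hsu : s ≤ u := hu.1.le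
    have hupos : (0:ℝ) < u := lt_of_lt_of_le hspos hsu
    have hune : u ≠ 0 := ne_of_gt hupos
    have h1u : (1:ℝ) ≤ u := le_trans hs hsu
    have hμ : 0 ≤ L t - L u := by
      have : Real.log u ≤ Real.log t := Real.log_le_log hupos hu.2
      simp only [hLdef]
      nlinarith
    have hmerge : Et' * E u = exp ((-(L t - L u)) • A) := by
      rw [hEt'def, hEdef]
      beta_reduce
      rw [← Matrix.exp_add_of_commute _ _ (((Commute.refl A).smul_right (L u)).smul_left (-(L t)))]
      rw [← add_smul]
      congr 2
      ring
    set X : Matrix (Fin k) (Fin k) ℝ := (A - Ahat u) * Φ u with hXdef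
    have hstep1 : Et' * g u = (Cα * u⁻¹) • (exp ((-(L t - L u)) • A) * X) := by
      rw [hgdef]
      rw [mul_smul_comm, ← mul_assoc, hmerge]
    have hnorm1 : ‖Et' * g u‖ = (Cα * u⁻¹) * ‖exp ((-(L t - L u)) • A) * X‖ := by
      rw [hstep1, norm_smul, Real.norm_eq_abs, abs_of_pos (by positivity)]
    have hexpmul := exp_mul_norm_le (C := C) hAq X hμ
    have hXnorm : ‖X‖ ≤ δ * (Real.sqrt k * Real.exp (-(C * (L u)))) := by
      have hphi : ‖Φ u‖ ≤ Real.sqrt k * Real.exp (-(C * Cα * Real.log (u/s))) :=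
        phi_decay hC hCα hs (fun v hv => hAhatq v (le_trans hs hv)) hΦs hΦ hsu
      have hconv : C * Cα * Real.log (u/s) = C * (L u) := by
        rw [Real.log_div hune hsne]
        simp only [hLdef]
        ring
      rw [hconv] at hphi
      calc ‖X‖ ≤ ‖A - Ahat u‖ * ‖Φ u‖ := norm_mul_le _ _
      _ ≤ δ * (Real.sqrt k * Real.exp (-(C * (L u)))) := by
          apply mul_le_mul _ hphi (norm_nonneg _) hδ
          rw [norm_sub_rev]
          exact hAhatδ u h1u
    have hee : Real.exp (-(C * (L t - L u))) * Real.exp (-(C * (L u)))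
        = Real.exp (-(C * (L t))) := by
      rw [← Real.exp_add]; congr 1; ring
    calc ‖Et' * g u‖ = (Cα * u⁻¹) * ‖exp ((-(L t - L u)) • A) * X‖ := hnorm1
    _ ≤ (Cα * u⁻¹) * (Real.exp (-(C * (L t - L u))) * ‖X‖) := by
        apply mul_le_mul_of_nonneg_left hexpmul (by positivity)
    _ ≤ (Cα * u⁻¹) * (Real.exp (-(C * (L t - L u))) *
          (δ * (Real.sqrt k * Real.exp (-(C * (L u)))))) := by
        apply mul_le_mul_of_nonneg_left _ (by positivity)
        exact mul_le_mul_of_nonneg_left hXnorm (Real.exp_pos _).le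
    _ = (Real.sqrt k * Cα * δ *
          (Real.exp (-(C * (L t - L u))) * Real.exp (-(C * (L u))))) * (1/u) := by ring
    _ = B * (1/u) := by rw [hee]
  have hboundint : IntervalIntegrable (fun u => B * (1/u)) MeasureTheory.volume s t := by
    apply ContinuousOn.intervalIntegrable_of_Icc hts
    exact continuousOn_const.mul (continuousOn_const.div continuousOn_id
      (fun u hu => hsub0 hu))
  have hae : ∀ᵐ u ∂(MeasureTheory.volume.restrict (Set.uIoc s t)),
      ‖Et' * g u‖ ≤ B * (1/u) := by
    rw [Set.uIoc_of_le hts]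
    exact (MeasureTheory.ae_restrict_mem measurableSet_Ioc).mono hpt
  have hintnorm : ‖∫ u in s..t, Et' * g u‖ ≤ |∫ u in s..t, B * (1/u)| :=
    intervalIntegral.norm_integral_le_abs_of_norm_le hae hboundint
  have hval : (∫ u in s..t, B * (1/u)) = B * Real.log (t/s) := by
    rw [intervalIntegral.integral_const_mul]
    congr 1
    apply integral_one_div
    intro h0
    rw [Set.uIcc_of_le hts] at h0
    exact hsub0 h0 rfl
  have hlog : 0 ≤ Real.log (t/s) := Real.log_nonneg ((one_le_div hspos).mpr hts)
  have habs : |∫ u in s..t, B * (1/u)| = B * Real.log (t/s) := by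
    rw [hval, abs_of_nonneg (mul_nonneg hBnonneg hlog)]
  have hpow : Real.exp (-(C * (L t))) = (s/t) ^ (C * Cα) := by
    rw [Real.rpow_def_of_pos (div_pos hspos htpos)]
    congr 1
    rw [Real.log_div hsne htne]
    simp only [hLdef]
    ring
  have hfinal : ‖Φ t - exp ((-(Cα * Real.log (t / s))) • A)‖ ≤ B * Real.log (t/s) := by
    rw [hdiff, hcomm_int]
    exact hintnorm.trans (le_of_eq habs)
  refine hfinal.trans ?_
  rw [hBdef, hpow]
  have hpownn : 0 ≤ (s/t) ^ (C * Cα) := Real.rpow_nonneg (div_pos hspos htpos).le _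
  have hc : 0 ≤ Real.sqrt k * Cα * δ := mul_nonneg (mul_nonneg (Real.sqrt_nonneg _) hCα.le) hδ
  nlinarith [mul_nonneg (mul_nonneg hc hpownn) hlog, mul_nonneg hc hpownn]
end

section
/- Let (Ω, F, P) be a probability space, k ≥ 1, and let Σ be a symmetric positive definite real k×k matrix. Let (Z_t)_{t ≥ 1} be a family of ℝ^k-valued random vectors on Ω. Suppose that for every η > 0 there exists a family (Z̃^η_t)_{t ≥ 1} of ℝ^k-valued random vectors on Ω such that, as t → ∞, the law of Z̃^η_t converges weakly to the centered Gaussian measure on ℝ^k with covariance η² Σ, and the law of Z_t + Z̃^η_t also converges weakly to the centered Gaussian measure with covariance η² Σ. Then Z_t → 0 in probability as t → ∞, i.e. for every ε > 0, P(‖Z_t‖ > ε) → 0. -/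
open MeasureTheory Filter ProbabilityTheory

/-- `μ` is the centered Gaussian measure on `ℝ^k` with covariance matrix `S`: it is a
probability measure all of whose one-dimensional projections `L` are real Gaussian with mean
`0` and variance `vᵀ S v`, where `v` is the vector representing `L`. -/
def IsCenteredGaussianWithCov {k : ℕ} (μ : Measure (EuclideanSpace ℝ (Fin k)))
    (S : Matrix (Fin k) (Fin k) ℝ) : Prop :=
  IsProbabilityMeasure μ ∧
    ∀ L : EuclideanSpace ℝ (Fin k) →L[ℝ] ℝ,
      μ.map L = ProbabilityTheory.gaussianReal 0
        (Real.toNNReal (∑ i, ∑ j,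
          L (EuclideanSpace.single i 1) * S i j * L (EuclideanSpace.single j 1)))

/-- The family of measures `ν t` converges weakly, as `t → ∞`, to the measure `μ`:
integrals of bounded continuous functions converge. -/
def TendstoWeaklyAtTop {k : ℕ} (ν : ℝ → Measure (EuclideanSpace ℝ (Fin k)))
    (μ : Measure (EuclideanSpace ℝ (Fin k))) : Prop :=
  ∀ f : BoundedContinuousFunction (EuclideanSpace ℝ (Fin k)) ℝ,
    Tendsto (fun t => ∫ x, f x ∂(ν t)) atTop (nhds (∫ x, f x ∂μ))


noncomputable def bump {k : ℕ} (a b : ℝ) : BoundedContinuousFunction (EuclideanSpace ℝ (Fin k)) ℝ :=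
  BoundedContinuousFunction.mkOfBound
    ⟨fun x => min 1 (max 0 ((‖x‖ - a) / (b - a))), by fun_prop⟩ 2
    (by
      intro x y
      simp only [ContinuousMap.coe_mk]
      have h1 : ∀ z : EuclideanSpace ℝ (Fin k),
          min 1 (max 0 ((‖z‖ - a) / (b - a))) ∈ Set.Icc (0:ℝ) 1 := fun z =>
        ⟨le_min zero_le_one (le_max_left _ _), min_le_left _ _⟩
      have hx := h1 x; have hy := h1 y
      rw [Real.dist_eq, abs_le]
      constructor
      · linarith [hx.1, hy.2]
      · linarith [hx.2, hy.1])

lemma bump_apply {k : ℕ} (a b : ℝ) (x : EuclideanSpace ℝ (Fin k)) :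
    bump a b x = min 1 (max 0 ((‖x‖ - a) / (b - a))) := rfl

lemma bump_nonneg {k : ℕ} (a b : ℝ) (x : EuclideanSpace ℝ (Fin k)) : 0 ≤ bump a b x :=
  le_min zero_le_one (le_max_left _ _)

lemma bump_le_one {k : ℕ} (a b : ℝ) (x : EuclideanSpace ℝ (Fin k)) : bump a b x ≤ 1 :=
  min_le_left _ _

lemma bump_eq_one {k : ℕ} {a b : ℝ} (hab : a < b) {x : EuclideanSpace ℝ (Fin k)}
    (hx : b ≤ ‖x‖) : bump a b x = 1 := by
  have h : (1:ℝ) ≤ (‖x‖ - a) / (b - a) := (le_div_iff₀ (by linarith)).2 (by linarith)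
  rw [bump_apply, min_eq_left (le_max_of_le_right h)]

lemma bump_eq_zero {k : ℕ} {a b : ℝ} (hab : a < b) {x : EuclideanSpace ℝ (Fin k)}
    (hx : ‖x‖ ≤ a) : bump a b x = 0 := by
  have h : (‖x‖ - a) / (b - a) ≤ 0 := div_nonpos_of_nonpos_of_nonneg (by linarith) (by linarith)
  rw [bump_apply, max_eq_left h, min_eq_right zero_le_one]

lemma meas_le_integral_bump {k : ℕ} {a b : ℝ} (hab : a < b)
    (ν : Measure (EuclideanSpace ℝ (Fin k))) [IsProbabilityMeasure ν] :
    ν {x | b ≤ ‖x‖} ≤ ENNReal.ofReal (∫ x, bump a b x ∂ν) := by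
  have hset : MeasurableSet {x : EuclideanSpace ℝ (Fin k) | b ≤ ‖x‖} :=
    measurableSet_le measurable_const continuous_norm.measurable
  have h1 : ν {x | b ≤ ‖x‖}
      = ∫⁻ x, ({x : EuclideanSpace ℝ (Fin k) | b ≤ ‖x‖}).indicator (fun _ => 1) x ∂ν := by
    rw [lintegral_indicator hset]; simp
  rw [h1, ofReal_integral_eq_lintegral_ofReal ((bump a b).integrable ν)
    (ae_of_all _ (bump_nonneg a b))]
  refine lintegral_mono fun x => ?_
  by_cases hx : x ∈ {x : EuclideanSpace ℝ (Fin k) | b ≤ ‖x‖}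
  · rw [Set.indicator_of_mem hx, bump_eq_one hab hx]
    simp
  · rw [Set.indicator_of_notMem hx]
    exact zero_le

lemma integral_bump_le_meas {k : ℕ} {a b : ℝ} (hab : a < b)
    (ν : Measure (EuclideanSpace ℝ (Fin k))) [IsProbabilityMeasure ν] :
    ∫ x, bump a b x ∂ν ≤ (ν {x | a ≤ ‖x‖}).toReal := by
  have hset : MeasurableSet {x : EuclideanSpace ℝ (Fin k) | a ≤ ‖x‖} :=
    measurableSet_le measurable_const continuous_norm.measurable
  change _ ≤ ν.real _
  rw [← integral_indicator_one hset]
  refine integral_mono ((bump a b).integrable ν)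
    ((integrable_const (1:ℝ)).indicator hset) fun x => ?_
  by_cases hx : x ∈ {x : EuclideanSpace ℝ (Fin k) | a ≤ ‖x‖}
  · rw [Set.indicator_of_mem hx]
    exact bump_le_one a b x
  · rw [Set.indicator_of_notMem hx]
    exact le_of_eq (bump_eq_zero hab (le_of_not_ge hx))

-- projection variance computation
lemma proj_gauss {k : ℕ} {μ : Measure (EuclideanSpace ℝ (Fin k))}
    {S : Matrix (Fin k) (Fin k) ℝ} {η : ℝ}
    (hμ : IsCenteredGaussianWithCov μ ((η ^ 2) • S)) (i : Fin k) :
    μ.map (EuclideanSpace.proj (𝕜 := ℝ) i)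
      = gaussianReal 0 (Real.toNNReal (η ^ 2 * S i i)) := by
  have h := hμ.2 (EuclideanSpace.proj i)
  have hsum : (∑ i', ∑ j', (EuclideanSpace.proj (𝕜 := ℝ) i) (EuclideanSpace.single i' 1)
      * ((η ^ 2) • S) i' j' * (EuclideanSpace.proj (𝕜 := ℝ) i) (EuclideanSpace.single j' 1))
      = η ^ 2 * S i i := by
    have happ : ∀ (j : Fin k) (y : EuclideanSpace ℝ (Fin k)),
        EuclideanSpace.proj (𝕜 := ℝ) j y = y j := fun _ _ => rfl
    simp [happ, EuclideanSpace.single_apply, ite_mul, mul_ite,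
      Finset.sum_ite_eq', Matrix.smul_apply, smul_eq_mul]
  rw [h, hsum]

-- scaling of gaussian tail
lemma gauss_scale {s η : ℝ} (hη : 0 < η) :
    gaussianReal 0 (Real.toNNReal (η ^ 2 * s))
      = (gaussianReal 0 (Real.toNNReal s)).map (fun x => η * x) := by
  rw [gaussianReal_map_const_mul]
  congr 1
  · simp
  · ext
    rw [Real.toNNReal_mul (sq_nonneg η)]
    push_cast
    rw [Real.coe_toNNReal _ (sq_nonneg η)]

lemma norm_le_union {k : ℕ} (hk : 1 ≤ k) (a : ℝ) (ha : 0 < a)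
    (x : EuclideanSpace ℝ (Fin k)) (hx : a ≤ ‖x‖) :
    ∃ i, a / Real.sqrt k ≤ |x i| := by
  by_contra hcon
  push_neg at hcon
  have hk' : (0:ℝ) < k := by exact_mod_cast hk
  have hs : (0:ℝ) < Real.sqrt k := Real.sqrt_pos.2 hk'
  have ha' : 0 < a / Real.sqrt k := div_pos ha hs
  have hlt : ∑ i, ‖x i‖ ^ 2 < a ^ 2 := by
    haveI : Nonempty (Fin k) := ⟨⟨0, by omega⟩⟩
    calc ∑ i, ‖x i‖ ^ 2 < ∑ _i : Fin k, (a / Real.sqrt k) ^ 2 := by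
          refine Finset.sum_lt_sum_of_nonempty Finset.univ_nonempty fun i _ => ?_
          have := hcon i
          have h0 : (0:ℝ) ≤ |x i| := abs_nonneg _
          rw [Real.norm_eq_abs]
          nlinarith
      _ = a ^ 2 := by
          rw [Finset.sum_const, Finset.card_univ, Fintype.card_fin, nsmul_eq_mul,
            div_pow, Real.sq_sqrt hk'.le]
          field_simp
  have : ‖x‖ < a := by
    rw [EuclideanSpace.norm_eq]
    calc Real.sqrt (∑ i, ‖x i‖ ^ 2) < Real.sqrt (a ^ 2) := by
          exact Real.sqrt_lt_sqrt (Finset.sum_nonneg fun i _ => sq_nonneg _) hlt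
      _ = a := Real.sqrt_sq ha.le
  linarith

lemma tail_small {k : ℕ} (hk : 1 ≤ k) (S : Matrix (Fin k) (Fin k) ℝ) (a δ : ℝ)
    (ha : 0 < a) (hδ : 0 < δ) :
    ∃ η : ℝ, 0 < η ∧ ∀ μ : Measure (EuclideanSpace ℝ (Fin k)),
      IsCenteredGaussianWithCov μ ((η ^ 2) • S) → μ {x | a ≤ ‖x‖} < ENNReal.ofReal δ := by
  have hk' : (0:ℝ) < k := by exact_mod_cast hk
  set a' : ℝ := a / Real.sqrt k with ha'def
  have ha' : 0 < a' := div_pos ha (Real.sqrt_pos.2 hk')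
  -- for each i, tail of the fixed gaussian tends to 0
  have htail : ∀ i : Fin k, Tendsto (fun m : ℕ =>
      gaussianReal 0 (Real.toNNReal (S i i)) {y : ℝ | (m:ℝ) ≤ |y|}) atTop (nhds 0) := by
    intro i
    have hmeas : ∀ m : ℕ, MeasurableSet {y : ℝ | (m:ℝ) ≤ |y|} := fun m =>
      measurableSet_le measurable_const measurable_abs
    have hanti : Antitone (fun m : ℕ => {y : ℝ | (m:ℝ) ≤ |y|}) := by
      intro m n hmn y hy
      simp only [Set.mem_setOf_eq] at *
      exact le_trans (by exact_mod_cast hmn) hy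
    have hint : (⋂ m : ℕ, {y : ℝ | (m:ℝ) ≤ |y|}) = ∅ := by
      ext y
      simp only [Set.mem_iInter, Set.mem_setOf_eq, Set.mem_empty_iff_false, iff_false, not_forall]
      obtain ⟨m, hm⟩ := exists_nat_gt |y|
      exact ⟨m, by push_neg; exact hm⟩
    have := MeasureTheory.tendsto_measure_iInter_atTop
      (μ := gaussianReal 0 (Real.toNNReal (S i i)))
      (fun m => (hmeas m).nullMeasurableSet) hanti ⟨0, measure_ne_top _ _⟩
    rwa [hint, measure_empty] at this
  -- choose a common large m
  have hev : ∀ᶠ m : ℕ in atTop, (∀ i : Fin k,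
      gaussianReal 0 (Real.toNNReal (S i i)) {y : ℝ | (m:ℝ) ≤ |y|}
        < ENNReal.ofReal (δ / (2 * k))) ∧ 1 ≤ m := by
    refine Filter.Eventually.and (eventually_all.2 fun i => ?_) (eventually_ge_atTop 1)
    exact (htail i).eventually_lt_const (by positivity)
  obtain ⟨m, hm, hm1⟩ := hev.exists
  have hmpos : (0:ℝ) < m := by exact_mod_cast hm1
  refine ⟨a' / m, div_pos ha' hmpos, fun μ hμ => ?_⟩
  have hprob : IsProbabilityMeasure μ := hμ.1
  set η : ℝ := a' / m with hηdef
  have hη : 0 < η := div_pos ha' hmpos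
  -- union bound
  have hsub : {x : EuclideanSpace ℝ (Fin k) | a ≤ ‖x‖} ⊆ ⋃ i, {x | a' ≤ |x i|} := by
    intro x hx
    obtain ⟨i, hi⟩ := norm_le_union hk a ha x hx
    exact Set.mem_iUnion.2 ⟨i, hi⟩
  have hstep : ∀ i : Fin k, μ {x | a' ≤ |x i|}
      ≤ ENNReal.ofReal (δ / (2 * k)) := by
    intro i
    have hset : MeasurableSet {y : ℝ | a' ≤ |y|} :=
      measurableSet_le measurable_const measurable_abs
    have h1 : μ {x | a' ≤ |x i|} = (μ.map (EuclideanSpace.proj (𝕜 := ℝ) i)) {y | a' ≤ |y|} := by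
      rw [Measure.map_apply (EuclideanSpace.proj (𝕜 := ℝ) i).continuous.measurable hset]
      rfl
    rw [h1, proj_gauss hμ i, gauss_scale hη,
      Measure.map_apply (measurable_const_mul η) hset]
    have hsetseq : (fun x => η * x) ⁻¹' {y : ℝ | a' ≤ |y|} = {y : ℝ | (m:ℝ) ≤ |y|} := by
      ext y
      simp only [Set.mem_preimage, Set.mem_setOf_eq, abs_mul, abs_of_pos hη]
      rw [hηdef, div_mul_eq_mul_div, le_div_iff₀ hmpos, mul_comm a' (m:ℝ)]
      constructor
      · intro hle
        have := (mul_le_mul_iff_right₀ ha').1 (by linarith [hle] : a' * (m:ℝ) ≤ a' * |y|)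
        exact this
      · intro hle
        have := mul_le_mul_of_nonneg_left hle ha'.le
        linarith
    rw [hsetseq]
    exact ((hm i).le)
  calc μ {x | a ≤ ‖x‖} ≤ μ (⋃ i, {x | a' ≤ |x i|}) := measure_mono hsub
    _ ≤ ∑ i : Fin k, μ {x | a' ≤ |x i|} := measure_iUnion_fintype_le _ _
    _ ≤ ∑ _i : Fin k, ENNReal.ofReal (δ / (2 * k)) := Finset.sum_le_sum fun i _ => hstep i
    _ = k * ENNReal.ofReal (δ / (2 * k)) := by
        rw [Finset.sum_const, Finset.card_univ, Fintype.card_fin, nsmul_eq_mul]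
    _ = ENNReal.ofReal (k * (δ / (2 * k))) := by
        rw [ENNReal.ofReal_mul (by positivity)]
        congr
        simp [ENNReal.ofReal_natCast]
    _ < ENNReal.ofReal δ := by
        rw [ENNReal.ofReal_lt_ofReal_iff hδ]
        rw [mul_div_assoc']
        rw [div_lt_iff₀ (by positivity)]
        nlinarith

/-- If for every `η > 0` there are random vectors `Z̃^η_t` whose laws converge
weakly to the centered Gaussian with covariance `η²Σ`, and such that the laws of `Z_t + Z̃^η_t`
converge weakly to the same Gaussian, then `Z_t → 0` in probability. -/
theorem stmt14 {Ω : Type*} [MeasurableSpace Ω] (P : Measure Ω) [IsProbabilityMeasure P]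
    (k : ℕ) (hk : 1 ≤ k)
    (S : Matrix (Fin k) (Fin k) ℝ) (hS : S.PosDef)
    (Z : ℝ → Ω → EuclideanSpace ℝ (Fin k)) (hZ : ∀ t, Measurable (Z t))
    (h : ∀ η : ℝ, 0 < η →
      ∃ Zt : ℝ → Ω → EuclideanSpace ℝ (Fin k),
        (∀ t, Measurable (Zt t)) ∧
        ∃ μη : Measure (EuclideanSpace ℝ (Fin k)),
          IsCenteredGaussianWithCov μη ((η ^ 2) • S) ∧
          TendstoWeaklyAtTop (fun t => P.map (Zt t)) μη ∧
          TendstoWeaklyAtTop (fun t => P.map (fun ω => Z t ω + Zt t ω)) μη) :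
    ∀ ε > (0 : ℝ), Tendsto (fun t => P {ω | ε < ‖Z t ω‖}) atTop (nhds 0) := by
  intro ε hε
  rw [ENNReal.tendsto_nhds_zero]
  intro δ hδ
  set d : ℝ := (min δ 1).toReal with hd
  have hmin_ne : min δ 1 ≠ ⊤ := ne_top_of_le_ne_top ENNReal.one_ne_top (min_le_right _ _)
  have hminpos : 0 < min δ 1 := lt_min hδ one_pos
  have hdpos : 0 < d := ENNReal.toReal_pos hminpos.ne' hmin_ne
  have hofd : ENNReal.ofReal d = min δ 1 := ENNReal.ofReal_toReal hmin_ne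
  suffices hsuff : ∀ᶠ t in atTop, P {ω | ε < ‖Z t ω‖} ≤ ENNReal.ofReal d by
    refine hsuff.mono fun t ht => ht.trans ?_
    rw [hofd]; exact min_le_left _ _
  obtain ⟨η, hη, hηtail⟩ := tail_small hk S (ε/4) (d/4) (by positivity) (by positivity)
  obtain ⟨Zt, hZt, μη, hgauss, hw1, hw2⟩ := h η hη
  haveI hprob : IsProbabilityMeasure μη := hgauss.1
  have hab : ε/4 < ε/2 := by linarith
  have hint : ∫ x, bump (ε/4) (ε/2) x ∂μη < d/2 := by
    have h1 := integral_bump_le_meas hab μη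
    have h2 := hηtail μη hgauss
    have h3 : (μη {x | ε/4 ≤ ‖x‖}).toReal < d/4 :=
      (ENNReal.lt_ofReal_iff_toReal_lt (measure_ne_top _ _)).1 h2
    linarith
  have hev1 := (hw1 (bump (ε/4) (ε/2))).eventually_lt_const hint
  have hev2 := (hw2 (bump (ε/4) (ε/2))).eventually_lt_const hint
  filter_upwards [hev1, hev2] with t h1 h2
  have hmeasW : Measurable (fun ω => Z t ω + Zt t ω) := (hZ t).add (hZt t)
  haveI : IsProbabilityMeasure (P.map (Zt t)) :=
    Measure.isProbabilityMeasure_map (hZt t).aemeasurable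
  haveI : IsProbabilityMeasure (P.map (fun ω => Z t ω + Zt t ω)) :=
    Measure.isProbabilityMeasure_map hmeasW.aemeasurable
  have hsetb : MeasurableSet {x : EuclideanSpace ℝ (Fin k) | ε/2 ≤ ‖x‖} :=
    measurableSet_le measurable_const continuous_norm.measurable
  have hsub : {ω | ε < ‖Z t ω‖}
      ⊆ {ω | ε/2 ≤ ‖Z t ω + Zt t ω‖} ∪ {ω | ε/2 ≤ ‖Zt t ω‖} := by
    intro ω hω
    simp only [Set.mem_setOf_eq] at hω
    have key : ‖Z t ω‖ ≤ ‖Z t ω + Zt t ω‖ + ‖Zt t ω‖ := by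
      have := norm_sub_le (Z t ω + Zt t ω) (Zt t ω)
      simpa using this
    rcases le_or_gt (ε/2) ‖Z t ω + Zt t ω‖ with hc | hc
    · exact Or.inl hc
    · exact Or.inr (by simp only [Set.mem_setOf_eq]; linarith)
  have hb1 : P {ω | ε/2 ≤ ‖Z t ω + Zt t ω‖} ≤ ENNReal.ofReal (d/2) := by
    have : P {ω | ε/2 ≤ ‖Z t ω + Zt t ω‖}
        = (P.map (fun ω => Z t ω + Zt t ω)) {x | ε/2 ≤ ‖x‖} := by
      rw [Measure.map_apply hmeasW hsetb]; rfl
    rw [this]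
    exact (meas_le_integral_bump hab _).trans (ENNReal.ofReal_le_ofReal h2.le)
  have hb2 : P {ω | ε/2 ≤ ‖Zt t ω‖} ≤ ENNReal.ofReal (d/2) := by
    have : P {ω | ε/2 ≤ ‖Zt t ω‖} = (P.map (Zt t)) {x | ε/2 ≤ ‖x‖} := by
      rw [Measure.map_apply (hZt t) hsetb]; rfl
    rw [this]
    exact (meas_le_integral_bump hab _).trans (ENNReal.ofReal_le_ofReal h1.le)
  calc P {ω | ε < ‖Z t ω‖}
      ≤ P ({ω | ε/2 ≤ ‖Z t ω + Zt t ω‖} ∪ {ω | ε/2 ≤ ‖Zt t ω‖}) := measure_mono hsub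
    _ ≤ P {ω | ε/2 ≤ ‖Z t ω + Zt t ω‖} + P {ω | ε/2 ≤ ‖Zt t ω‖} := measure_union_le _ _
    _ ≤ ENNReal.ofReal (d/2) + ENNReal.ofReal (d/2) := add_le_add hb1 hb2
    _ = ENNReal.ofReal d := by
        rw [← ENNReal.ofReal_add (by positivity) (by positivity)]
        norm_num
end
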